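/- arXiv:1111.0390 — 4 statements merged into one kernel-verified Lean document; each statement's English description precedes it below -/
import Mathlib

section
/- Let (u_1,…,u_n) be a solution of the SU(n+1) Toda system without sources and let (φ_1,…,φ_n) be smooth functions on ℝ² satisfying the linearized system Δφ_i + Σ_{j=1}^n a_{ij} e^{u_j} φ_j = 0 on ℝ² for all i. Set Φ_i = Σ_{j=1}^n a^{ij} φ_j (with Φ_0 = Φ_{n+1} = 0) and define Y := Σ_{i=1}^n ∂_z^2 Φ_i − 2 Σ_{i=1}^n (∂_z U_i)(∂_z Φ_i) + Σ_{i=1}^{n−1} [ (∂_z Φ_i)(∂_z U_{i+1}) + (∂_z U_i)(∂_z Φ_{i+1}) ]. Then ∂_{z̄} Y = 0 on ℝ², i.e. Y is an entire holomorphic function. -/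
open Complex Finset MeasureTheory

noncomputable section

/-- Wirtinger derivative `∂_z = (∂_x - i ∂_y)/2` of a function `f : ℂ → ℂ`,
identifying `ℝ²` with `ℂ`. -/
def wdz (f : ℂ → ℂ) (z : ℂ) : ℂ :=
  (fderiv ℝ f z 1 - Complex.I * fderiv ℝ f z Complex.I) / 2

/-- Wirtinger derivative `∂_z̄ = (∂_x + i ∂_y)/2`. -/
def wdzbar (f : ℂ → ℂ) (z : ℂ) : ℂ :=
  (fderiv ℝ f z 1 + Complex.I * fderiv ℝ f z Complex.I) / 2

/-- Laplacian `Δ = ∂_xx + ∂_yy` of a real-valued function on `ℂ ≃ ℝ²`. -/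
def lap (u : ℂ → ℝ) (z : ℂ) : ℝ :=
  fderiv ℝ (fun w => fderiv ℝ u w 1) z 1 +
    fderiv ℝ (fun w => fderiv ℝ u w Complex.I) z Complex.I

/-- Cartan matrix of SU(n+1) (entries indexed by `1 ≤ i, j ≤ n`):
`a_{ii} = 2`, `a_{ij} = -1` if `|i - j| = 1`, `a_{ij} = 0` otherwise. -/
def cartan (i j : ℕ) : ℝ :=
  if i = j then 2 else if i + 1 = j ∨ j + 1 = i then -1 else 0

/-- Entries of the inverse Cartan matrix: `a^{ij} = min(i,j)·(n+1−max(i,j))/(n+1)`. -/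
def cartanInv (n i j : ℕ) : ℝ :=
  (min i j : ℝ) * ((n : ℝ) + 1 - (max i j : ℝ)) / ((n : ℝ) + 1)

/-- `U_i = Σ_{j=1}^n a^{ij} u_j` with the convention `U_i = 0` for `i ∉ {1,…,n}`. -/
def Ufun (n : ℕ) (u : ℕ → ℂ → ℝ) (i : ℕ) (z : ℂ) : ℝ :=
  if 1 ≤ i ∧ i ≤ n then ∑ j ∈ Finset.Icc 1 n, cartanInv n i j * u j z else 0

/-- `U_i` viewed as a complex-valued function. -/
def UfunC (n : ℕ) (u : ℕ → ℂ → ℝ) (i : ℕ) : ℂ → ℂ := fun z => (Ufun n u i z : ℂ)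

/-- `α_i = Σ_{j=1}^n a^{ij} γ_j`. -/
def alph (n : ℕ) (γ : ℕ → ℝ) (i : ℕ) : ℝ :=
  ∑ j ∈ Finset.Icc 1 n, cartanInv n i j * γ j

/-- The invariants `W_k^j`:  `W_0^j = 0`, `W_1^j = −e^{U_1} ∂_z^{j+1}(e^{−U_1})`,
`W_{k+1}^j = −(∂_z̄ W_k^j)/(∂_z ∂_z̄ U_k)`. -/
def Wk (n : ℕ) (u : ℕ → ℂ → ℝ) : ℕ → ℕ → ℂ → ℂ
  | 0, _ => fun _ => 0
  | 1, j => fun z =>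
      -Complex.exp ((Ufun n u 1 z : ℝ) : ℂ) *
        wdz^[j + 1] (fun w => Complex.exp (-((Ufun n u 1 w : ℝ) : ℂ))) z
  | (k + 2), j => fun z =>
      -(wdzbar (Wk n u (k + 1) j) z) / wdz (wdzbar (UfunC n u (k + 1))) z

/-- A solution of the `SU(n+1)` Toda system without sources: smooth functions
`u_1, …, u_n : ℝ² → ℝ` with `Δu_i + Σ_j a_{ij} e^{u_j} = 0` on `ℝ²` and
`∫_{ℝ²} e^{u_i} < ∞`. -/
def IsTodaSolution (n : ℕ) (u : ℕ → ℂ → ℝ) : Prop :=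
  ∀ i ∈ Finset.Icc 1 n,
    ContDiff ℝ (⊤ : ℕ∞) (u i) ∧
    (∀ z : ℂ, lap (u i) z + ∑ j ∈ Finset.Icc 1 n, cartan i j * Real.exp (u j z) = 0) ∧
    MeasureTheory.Integrable (fun z : ℂ => Real.exp (u i z))

/-- A solution of the `SU(n+1)` Toda system with singular source `4πγ_iδ_0`:
smooth on `ℂ∖{0}`, `Δu_i + Σ_j a_{ij} e^{u_j} = 0` off the origin,
`u_i(z) − 2γ_i log|z|` bounded near `0`, and `∫ e^{u_i} < ∞`. -/
def IsSingularTodaSolution (n : ℕ) (γ : ℕ → ℝ) (u : ℕ → ℂ → ℝ) : Prop :=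
  ∀ i ∈ Finset.Icc 1 n,
    ContDiffOn ℝ (⊤ : ℕ∞) (u i) {(0 : ℂ)}ᶜ ∧
    (∀ z : ℂ, z ≠ 0 →
      lap (u i) z + ∑ j ∈ Finset.Icc 1 n, cartan i j * Real.exp (u j z) = 0) ∧
    (∃ ε > (0:ℝ), ∃ C : ℝ, ∀ z : ℂ, z ≠ 0 → ‖z‖ < ε →
      |u i z - 2 * γ i * Real.log (‖z‖)| ≤ C) ∧
    MeasureTheory.Integrable (fun z : ℂ => Real.exp (u i z))

/-- `det_k(f)`: the determinant of the `k×k` matrix `(∂_z^p ∂_z̄^q f)_{0 ≤ p,q ≤ k−1}`,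
with `det_0(f) = 1`. -/
def detk (k : ℕ) (f : ℂ → ℂ) (z : ℂ) : ℂ :=
  Matrix.det (Matrix.of fun p q : Fin k => wdz^[(p : ℕ)] (wdzbar^[(q : ℕ)] f) z)

local notation "Sm" => ContDiff ℝ (⊤:ℕ∞)

lemma fderiv_fderiv_apply {F : Type} [NormedAddCommGroup F] [NormedSpace ℝ F]
    {f : ℂ → F} (hf : Sm f) (z v w : ℂ) :
    fderiv ℝ (fun y => fderiv ℝ f y v) z w = fderiv ℝ (fderiv ℝ f) z w v := by
  have hdf : DifferentiableAt ℝ (fderiv ℝ f) z :=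
    ((hf.fderiv_right (m := (⊤:ℕ∞)) (by decide)).differentiable (by decide)) z
  have h : HasFDerivAt (fun y => (ContinuousLinearMap.apply ℝ F v) (fderiv ℝ f y))
      (((ContinuousLinearMap.apply ℝ F v)).comp (fderiv ℝ (fderiv ℝ f) z)) z :=
    ((ContinuousLinearMap.apply ℝ F v).hasFDerivAt).comp z hdf.hasFDerivAt
  rw [show (fun y => fderiv ℝ f y v)
      = (fun y => (ContinuousLinearMap.apply ℝ F v) (fderiv ℝ f y)) from rfl, h.fderiv]
  rfl

lemma dirDeriv_symm {F : Type} [NormedAddCommGroup F] [NormedSpace ℝ F]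
    {f : ℂ → F} (hf : Sm f) (z v w : ℂ) :
    fderiv ℝ (fun y => fderiv ℝ f y v) z w = fderiv ℝ (fun y => fderiv ℝ f y w) z v := by
  rw [fderiv_fderiv_apply hf, fderiv_fderiv_apply hf]
  exact (hf.contDiffAt.isSymmSndFDerivAt (n := (⊤:ℕ∞)) (by rw [minSmoothness_of_isRCLikeNormedField]; exact WithTop.coe_le_coe.mpr (le_top : (2:ℕ∞) ≤ ⊤))).eq w v

lemma dirDeriv_contDiff {F : Type} [NormedAddCommGroup F] [NormedSpace ℝ F]
    {f : ℂ → F} (hf : Sm f) (v : ℂ) :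
    Sm (fun z => fderiv ℝ f z v) :=
  (hf.fderiv_right (m := (⊤:ℕ∞)) (by decide)).clm_apply contDiff_const

lemma wdz_contDiff {f : ℂ → ℂ} (hf : Sm f) : Sm (wdz f) := by
  unfold wdz
  exact ((dirDeriv_contDiff hf 1).sub (contDiff_const.mul (dirDeriv_contDiff hf I))).div_const 2

lemma wdzbar_contDiff {f : ℂ → ℂ} (hf : Sm f) : Sm (wdzbar f) := by
  unfold wdzbar
  exact ((dirDeriv_contDiff hf 1).add (contDiff_const.mul (dirDeriv_contDiff hf I))).div_const 2

lemma wdz_add {f g : ℂ → ℂ} {z : ℂ} (hf : DifferentiableAt ℝ f z)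
    (hg : DifferentiableAt ℝ g z) :
    wdz (fun w => f w + g w) z = wdz f z + wdz g z := by
  unfold wdz; rw [fderiv_fun_add hf hg]; simp; ring

lemma wdzbar_add {f g : ℂ → ℂ} {z : ℂ} (hf : DifferentiableAt ℝ f z)
    (hg : DifferentiableAt ℝ g z) :
    wdzbar (fun w => f w + g w) z = wdzbar f z + wdzbar g z := by
  unfold wdzbar; rw [fderiv_fun_add hf hg]; simp; ring

lemma wdz_sub {f g : ℂ → ℂ} {z : ℂ} (hf : DifferentiableAt ℝ f z)
    (hg : DifferentiableAt ℝ g z) :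
    wdz (fun w => f w - g w) z = wdz f z - wdz g z := by
  unfold wdz; rw [fderiv_fun_sub hf hg]; simp; ring

lemma wdzbar_sub {f g : ℂ → ℂ} {z : ℂ} (hf : DifferentiableAt ℝ f z)
    (hg : DifferentiableAt ℝ g z) :
    wdzbar (fun w => f w - g w) z = wdzbar f z - wdzbar g z := by
  unfold wdzbar; rw [fderiv_fun_sub hf hg]; simp; ring

lemma wdz_const_mul {f : ℂ → ℂ} {z : ℂ} (hf : DifferentiableAt ℝ f z) (c : ℂ) :
    wdz (fun w => c * f w) z = c * wdz f z := by
  unfold wdz; rw [fderiv_const_mul hf]; simp; ring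

lemma wdzbar_const_mul {f : ℂ → ℂ} {z : ℂ} (hf : DifferentiableAt ℝ f z) (c : ℂ) :
    wdzbar (fun w => c * f w) z = c * wdzbar f z := by
  unfold wdzbar; rw [fderiv_const_mul hf]; simp; ring

lemma wdz_mul {f g : ℂ → ℂ} {z : ℂ} (hf : DifferentiableAt ℝ f z)
    (hg : DifferentiableAt ℝ g z) :
    wdz (fun w => f w * g w) z = wdz f z * g z + f z * wdz g z := by
  unfold wdz; rw [fderiv_fun_mul hf hg]; simp [smul_eq_mul]; ring

lemma wdzbar_mul {f g : ℂ → ℂ} {z : ℂ} (hf : DifferentiableAt ℝ f z)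
    (hg : DifferentiableAt ℝ g z) :
    wdzbar (fun w => f w * g w) z = wdzbar f z * g z + f z * wdzbar g z := by
  unfold wdzbar; rw [fderiv_fun_mul hf hg]; simp [smul_eq_mul]; ring

lemma wdz_const (c : ℂ) (z : ℂ) : wdz (fun _ => c) z = 0 := by
  unfold wdz; simp

lemma wdzbar_const (c : ℂ) (z : ℂ) : wdzbar (fun _ => c) z = 0 := by
  unfold wdzbar; simp

lemma wdz_sum {ι : Type} (s : Finset ι) (f : ι → ℂ → ℂ) {z : ℂ}
    (hf : ∀ i ∈ s, DifferentiableAt ℝ (f i) z) :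
    wdz (fun w => ∑ i ∈ s, f i w) z = ∑ i ∈ s, wdz (f i) z := by
  unfold wdz; rw [fderiv_fun_sum hf]
  simp only [ContinuousLinearMap.sum_apply, Finset.mul_sum]
  rw [← Finset.sum_sub_distrib, Finset.sum_div]

lemma wdzbar_sum {ι : Type} (s : Finset ι) (f : ι → ℂ → ℂ) {z : ℂ}
    (hf : ∀ i ∈ s, DifferentiableAt ℝ (f i) z) :
    wdzbar (fun w => ∑ i ∈ s, f i w) z = ∑ i ∈ s, wdzbar (f i) z := by
  unfold wdzbar; rw [fderiv_fun_sum hf]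
  simp only [ContinuousLinearMap.sum_apply, Finset.mul_sum]
  rw [← Finset.sum_add_distrib, Finset.sum_div]

-- commutation of wdz and wdzbar
lemma wdzbar_wdz_comm {f : ℂ → ℂ} (hf : Sm f) (z : ℂ) :
    wdzbar (wdz f) z = wdz (wdzbar f) z := by
  have h1 : DifferentiableAt ℝ (fun y => fderiv ℝ f y 1) z :=
    (dirDeriv_contDiff hf 1).differentiable (by decide) z
  have hI : DifferentiableAt ℝ (fun y => fderiv ℝ f y I) z :=
    (dirDeriv_contDiff hf I).differentiable (by decide) z
  have e1 : ∀ v, fderiv ℝ (wdz f) z v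
      = (fderiv ℝ (fun y => fderiv ℝ f y 1) z v - I * fderiv ℝ (fun y => fderiv ℝ f y I) z v) / 2 := by
    intro v
    have : wdz f = fun y => ((fun y => fderiv ℝ f y 1) y - I * (fun y => fderiv ℝ f y I) y) / 2 := rfl
    rw [this]
    rw [show (fun y => ((fun y => fderiv ℝ f y 1) y - I * (fun y => fderiv ℝ f y I) y) / 2)
        = (fun y => (2:ℂ)⁻¹ * ((fun y => fderiv ℝ f y 1) y - I * (fun y => fderiv ℝ f y I) y))
        from by funext y; ring]
    rw [fderiv_const_mul (h1.fun_sub (hI.const_mul I)) ((2:ℂ)⁻¹),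
        fderiv_fun_sub h1 (hI.const_mul I), fderiv_const_mul hI I]
    simp; ring
  have e2 : ∀ v, fderiv ℝ (wdzbar f) z v
      = (fderiv ℝ (fun y => fderiv ℝ f y 1) z v + I * fderiv ℝ (fun y => fderiv ℝ f y I) z v) / 2 := by
    intro v
    have : wdzbar f = fun y => ((fun y => fderiv ℝ f y 1) y + I * (fun y => fderiv ℝ f y I) y) / 2 := rfl
    rw [this]
    rw [show (fun y => ((fun y => fderiv ℝ f y 1) y + I * (fun y => fderiv ℝ f y I) y) / 2)
        = (fun y => (2:ℂ)⁻¹ * ((fun y => fderiv ℝ f y 1) y + I * (fun y => fderiv ℝ f y I) y))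
        from by funext y; ring]
    rw [fderiv_const_mul (h1.fun_add (hI.const_mul I)) ((2:ℂ)⁻¹),
        fderiv_fun_add h1 (hI.const_mul I), fderiv_const_mul hI I]
    simp; ring
  have L : wdzbar (wdz f) z = (fderiv ℝ (wdz f) z 1 + I * fderiv ℝ (wdz f) z I) / 2 := rfl
  have R : wdz (wdzbar f) z = (fderiv ℝ (wdzbar f) z 1 - I * fderiv ℝ (wdzbar f) z I) / 2 := rfl
  rw [L, R, e1 1, e1 I, e2 1, e2 I, dirDeriv_symm hf z 1 I]
  ring

-- real-cast lemmas
lemma fderiv_ofReal {u : ℂ → ℝ} {z : ℂ} (hu : DifferentiableAt ℝ u z) (v : ℂ) :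
    fderiv ℝ (fun w => ((u w : ℝ) : ℂ)) z v = ((fderiv ℝ u z v : ℝ) : ℂ) := by
  have h := (Complex.ofRealCLM.hasFDerivAt.comp z hu.hasFDerivAt).fderiv
  rw [show (fun w => ((u w:ℝ):ℂ)) = (Complex.ofRealCLM ∘ u) from rfl, h]; rfl

lemma ofReal_contDiff {u : ℂ → ℝ} (hu : ContDiff ℝ (⊤:ℕ∞) u) :
    ContDiff ℝ (⊤:ℕ∞) (fun w => ((u w : ℝ) : ℂ)) :=
  Complex.ofRealCLM.contDiff.comp hu

lemma wdzbar_ofReal {u : ℂ → ℝ} (hu : ContDiff ℝ (⊤:ℕ∞) u) :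
    wdzbar (fun w => ((u w : ℝ) : ℂ))
      = fun w => (((fderiv ℝ u w 1 : ℝ):ℂ) + I * ((fderiv ℝ u w I : ℝ):ℂ))/2 := by
  funext w
  unfold wdzbar
  rw [fderiv_ofReal ((hu.differentiable (by decide)) w) 1,
      fderiv_ofReal ((hu.differentiable (by decide)) w) I]

lemma wdz_wdzbar_ofReal {u : ℂ → ℝ} (hu : ContDiff ℝ (⊤:ℕ∞) u) (z : ℂ) :
    wdz (wdzbar (fun w => ((u w : ℝ) : ℂ))) z = ((lap u z : ℝ) : ℂ) / 4 := by
  have hd1 : ContDiff ℝ (⊤:ℕ∞) (fun w => fderiv ℝ u w 1) := dirDeriv_contDiff hu 1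
  have hdI : ContDiff ℝ (⊤:ℕ∞) (fun w => fderiv ℝ u w I) := dirDeriv_contDiff hu I
  have h1 : DifferentiableAt ℝ (fun w => ((fderiv ℝ u w 1 : ℝ):ℂ)) z :=
    ((ofReal_contDiff hd1).differentiable (by decide)) z
  have hI : DifferentiableAt ℝ (fun w => ((fderiv ℝ u w I : ℝ):ℂ)) z :=
    ((ofReal_contDiff hdI).differentiable (by decide)) z
  have key : ∀ v, fderiv ℝ (wdzbar (fun w => ((u w : ℝ) : ℂ))) z v
      = (((fderiv ℝ (fun w => fderiv ℝ u w 1) z v : ℝ):ℂ)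
          + I * ((fderiv ℝ (fun w => fderiv ℝ u w I) z v : ℝ):ℂ))/2 := by
    intro v
    rw [wdzbar_ofReal hu]
    rw [show (fun w => (((fderiv ℝ u w 1 : ℝ):ℂ) + I * ((fderiv ℝ u w I : ℝ):ℂ))/2)
        = (fun w => (2:ℂ)⁻¹ * (((fderiv ℝ u w 1 : ℝ):ℂ) + I * ((fderiv ℝ u w I : ℝ):ℂ)))
        from by funext y; ring]
    rw [fderiv_const_mul (h1.fun_add (hI.const_mul I)) ((2:ℂ)⁻¹),
        fderiv_fun_add h1 (hI.const_mul I), fderiv_const_mul hI I]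
    simp only [ContinuousLinearMap.smul_apply, ContinuousLinearMap.add_apply, smul_eq_mul]
    rw [fderiv_ofReal ((hd1.differentiable (by decide)) z) v,
        fderiv_ofReal ((hdI.differentiable (by decide)) z) v]
    ring
  have e : wdz (wdzbar (fun w => ((u w : ℝ) : ℂ))) z
      = (fderiv ℝ (wdzbar (fun w => ((u w : ℝ) : ℂ))) z 1
          - I * fderiv ℝ (wdzbar (fun w => ((u w : ℝ) : ℂ))) z I)/2 := rfl
  rw [e, key 1, key I, dirDeriv_symm hu z 1 I]
  unfold lap
  push_cast
  ring_nf
  rw [Complex.I_sq]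
  ring

lemma wdz_cexp {g : ℂ → ℂ} {z : ℂ} (hg : DifferentiableAt ℝ g z) :
    wdz (fun w => Complex.exp (g w)) z = Complex.exp (g z) * wdz g z := by
  have h := hg.hasFDerivAt.cexp
  unfold wdz
  rw [h.fderiv]
  simp [smul_eq_mul]; ring

lemma cartanInv_comm (n i j : ℕ) : cartanInv n i j = cartanInv n j i := by
  simp [cartanInv, min_comm, max_comm]

lemma cartanInv_zero_right (n i : ℕ) : cartanInv n i 0 = 0 := by
  simp [cartanInv]

lemma cartanInv_top_right (n i : ℕ) (h : i ≤ n + 1) : cartanInv n i (n+1) = 0 := by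
  unfold cartanInv
  rw [max_eq_right (Nat.cast_le.mpr h)]
  push_cast
  ring

lemma cartan_diag (k : ℕ) : cartan k k = 2 := by simp [cartan]

lemma cartan_sub_one (k : ℕ) (hk : 1 ≤ k) : cartan (k-1) k = -1 := by
  unfold cartan
  rw [if_neg (by omega), if_pos (Or.inl (by omega))]

lemma cartan_add_one (k : ℕ) : cartan (k+1) k = -1 := by
  unfold cartan
  rw [if_neg (by omega), if_pos (Or.inr rfl)]

lemma cartan_other (j k : ℕ) (h1 : j ≠ k) (h2 : j + 1 ≠ k) (h3 : k + 1 ≠ j) :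
    cartan j k = 0 := by
  unfold cartan
  rw [if_neg h1, if_neg (by push_neg; exact ⟨h2, h3⟩)]

lemma cartanInv_key (n i k : ℕ) (hk : 1 ≤ k) :
    2 * cartanInv n i k - cartanInv n i (k-1) - cartanInv n i (k+1)
      = if i = k then 1 else 0 := by
  have hn : ((n:ℝ)+1) ≠ 0 := by positivity
  unfold cartanInv
  rcases lt_trichotomy i k with h | h | h
  · rw [min_eq_left (Nat.cast_le.mpr (by omega : i ≤ k - 1)),
        min_eq_left (Nat.cast_le.mpr (by omega : i ≤ k)),
        min_eq_left (Nat.cast_le.mpr (by omega : i ≤ k + 1)),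
        max_eq_right (Nat.cast_le.mpr (by omega : i ≤ k - 1)),
        max_eq_right (Nat.cast_le.mpr (by omega : i ≤ k)),
        max_eq_right (Nat.cast_le.mpr (by omega : i ≤ k + 1)),
        if_neg (by omega), Nat.cast_sub hk]
    push_cast
    field_simp
    ring
  · subst h
    rw [min_eq_right (Nat.cast_le.mpr (by omega : i - 1 ≤ i)),
        min_eq_left (Nat.cast_le.mpr (by omega : i ≤ i + 1)),
        max_eq_left (Nat.cast_le.mpr (by omega : i - 1 ≤ i)),
        max_eq_right (Nat.cast_le.mpr (by omega : i ≤ i + 1)),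
        min_self, max_self, if_pos rfl, Nat.cast_sub hk]
    push_cast
    field_simp
    ring
  · rw [min_eq_right (Nat.cast_le.mpr (by omega : k - 1 ≤ i)),
        min_eq_right (Nat.cast_le.mpr (by omega : k ≤ i)),
        min_eq_right (Nat.cast_le.mpr (by omega : k + 1 ≤ i)),
        max_eq_left (Nat.cast_le.mpr (by omega : k - 1 ≤ i)),
        max_eq_left (Nat.cast_le.mpr (by omega : k ≤ i)),
        max_eq_left (Nat.cast_le.mpr (by omega : k + 1 ≤ i)),
        if_neg (by omega), Nat.cast_sub hk]
    push_cast
    field_simp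
    ring

lemma inv_mul_cartan (n i k : ℕ) (hi : 1 ≤ i) (hi2 : i ≤ n) (hk : 1 ≤ k) (hk2 : k ≤ n) :
    ∑ j ∈ Icc 1 n, cartanInv n i j * cartan j k = if i = k then 1 else 0 := by
  have step : ∀ j ∈ Icc 1 n, cartanInv n i j * cartan j k
      = (if j = k then 2 * cartanInv n i k else 0)
        + ((if j = k-1 then -cartanInv n i (k-1) else 0)
        + (if j = k+1 then -cartanInv n i (k+1) else 0)) := by
    intro j hj
    simp only [Finset.mem_Icc] at hj
    by_cases h1 : j = k
    · subst h1
      rw [if_pos rfl, if_neg (by omega), if_neg (by omega), cartan_diag]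
      ring
    · by_cases h2 : j = k - 1
      · subst h2
        rw [if_neg h1, if_pos rfl, if_neg (by omega), cartan_sub_one k hk]
        ring
      · by_cases h3 : j = k + 1
        · subst h3
          rw [if_neg h1, if_neg h2, if_pos rfl, cartan_add_one k]
          ring
        · rw [if_neg h1, if_neg h2, if_neg h3,
              cartan_other j k h1 (by omega) (by omega)]
          ring
  have hkmem : k ∈ Icc 1 n := by simp only [Finset.mem_Icc]; omega
  rw [Finset.sum_congr rfl step, Finset.sum_add_distrib, Finset.sum_add_distrib,
      Finset.sum_ite_eq' _ k, Finset.sum_ite_eq' _ (k-1), Finset.sum_ite_eq' _ (k+1),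
      if_pos hkmem]
  have e1 : (if k - 1 ∈ Icc 1 n then -cartanInv n i (k-1) else 0) = -cartanInv n i (k-1) := by
    by_cases h : k - 1 ∈ Icc 1 n
    · rw [if_pos h]
    · rw [if_neg h]
      simp only [Finset.mem_Icc] at h
      have : k = 1 := by omega
      subst this
      simp [cartanInv_zero_right]
  have e2 : (if k + 1 ∈ Icc 1 n then -cartanInv n i (k+1) else 0) = -cartanInv n i (k+1) := by
    by_cases h : k + 1 ∈ Icc 1 n
    · rw [if_pos h]
    · rw [if_neg h]
      simp only [Finset.mem_Icc] at h
      have hkn : k = n := by omega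
      rw [hkn, cartanInv_top_right n i (by omega)]
      ring
  rw [e1, e2, ← cartanInv_key n i k hk]
  ring

lemma cartanInv_zero_left (n j : ℕ) : cartanInv n 0 j = 0 := by
  simp [cartanInv]

lemma Ufun_eq (n : ℕ) (v : ℕ → ℂ → ℝ) (i : ℕ) (hi : i ≤ n + 1) (z : ℂ) :
    Ufun n v i z = ∑ j ∈ Icc 1 n, cartanInv n i j * v j z := by
  unfold Ufun
  by_cases h : 1 ≤ i ∧ i ≤ n
  · rw [if_pos h]
  · rw [if_neg h]
    have : ∀ j ∈ Icc 1 n, cartanInv n i j * v j z = 0 := by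
      intro j hj
      simp only [Finset.mem_Icc] at hj
      rcases (by omega : i = 0 ∨ i = n + 1) with h' | h'
      · subst h'; rw [cartanInv_zero_left]; ring
      · subst h'
        rw [cartanInv_comm, cartanInv_top_right n j (by omega)]; ring
    rw [Finset.sum_congr rfl this]
    simp

lemma u_from_U (n : ℕ) (v : ℕ → ℂ → ℝ) (i : ℕ) (hi1 : 1 ≤ i) (hi2 : i ≤ n) (z : ℂ) :
    v i z = 2 * Ufun n v i z - Ufun n v (i-1) z - Ufun n v (i+1) z := by
  rw [Ufun_eq n v i (by omega) z, Ufun_eq n v (i-1) (by omega) z,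
      Ufun_eq n v (i+1) (by omega) z, Finset.mul_sum,
      ← Finset.sum_sub_distrib, ← Finset.sum_sub_distrib]
  have step : ∀ j ∈ Icc 1 n,
      2 * (cartanInv n i j * v j z) - cartanInv n (i-1) j * v j z
        - cartanInv n (i+1) j * v j z
      = if j = i then v j z else 0 := by
    intro j hj
    have hkey := cartanInv_key n j i hi1
    rw [cartanInv_comm n i j, cartanInv_comm n (i-1) j, cartanInv_comm n (i+1) j]
    have : 2 * (cartanInv n j i * v j z) - cartanInv n j (i-1) * v j z
        - cartanInv n j (i+1) * v j z
        = (2 * cartanInv n j i - cartanInv n j (i-1) - cartanInv n j (i+1)) * v j z := by ring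
    rw [this, hkey]
    by_cases h : j = i
    · rw [if_pos h, if_pos h]; ring
    · rw [if_neg h, if_neg h]; ring
  rw [Finset.sum_congr rfl step, Finset.sum_ite_eq' _ i,
      if_pos (by simp only [Finset.mem_Icc]; omega)]

lemma fderiv_sum_const_mul {ι : Type} (s : Finset ι) (c : ι → ℝ) (g : ι → ℂ → ℝ) {z : ℂ}
    (hg : ∀ j ∈ s, DifferentiableAt ℝ (g j) z) (e : ℂ) :
    fderiv ℝ (fun w => ∑ j ∈ s, c j * g j w) z e = ∑ j ∈ s, c j * fderiv ℝ (g j) z e := by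
  rw [fderiv_fun_sum (fun j hj => (hg j hj).const_mul (c j))]
  simp only [ContinuousLinearMap.sum_apply]
  exact Finset.sum_congr rfl fun j hj => by
    rw [fderiv_const_mul (hg j hj)]; simp

lemma lap_sum {ι : Type} (s : Finset ι) (c : ι → ℝ) (v : ι → ℂ → ℝ)
    (hv : ∀ j ∈ s, ContDiff ℝ (⊤:ℕ∞) (v j)) (z : ℂ) :
    lap (fun w => ∑ j ∈ s, c j * v j w) z = ∑ j ∈ s, c j * lap (v j) z := by
  unfold lap
  have e1 : ∀ e : ℂ, (fun w => fderiv ℝ (fun y => ∑ j ∈ s, c j * v j y) w e)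
      = fun w => ∑ j ∈ s, c j * fderiv ℝ (v j) w e := by
    intro e; funext w
    exact fderiv_sum_const_mul s c v (fun j hj => (hv j hj).differentiable (by decide) w) e
  rw [e1 1, e1 I,
      fderiv_sum_const_mul s c (fun j => fun w => fderiv ℝ (v j) w 1)
        (fun j hj => (dirDeriv_contDiff (hv j hj) 1).differentiable (by decide) z) 1,
      fderiv_sum_const_mul s c (fun j => fun w => fderiv ℝ (v j) w I)
        (fun j hj => (dirDeriv_contDiff (hv j hj) I).differentiable (by decide) z) I,
      ← Finset.sum_add_distrib]
  exact Finset.sum_congr rfl fun j hj => by ring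

lemma lap_Ufun {n : ℕ} {v : ℕ → ℂ → ℝ} {r : ℕ → ℂ → ℝ}
    (hsm : ∀ j ∈ Icc 1 n, ContDiff ℝ (⊤:ℕ∞) (v j))
    (heq : ∀ j ∈ Icc 1 n, ∀ w, lap (v j) w = -(∑ k ∈ Icc 1 n, cartan j k * r k w))
    {i : ℕ} (hi1 : 1 ≤ i) (hi2 : i ≤ n) (z : ℂ) :
    lap (Ufun n v i) z = -(r i z) := by
  have hU : Ufun n v i = fun w => ∑ j ∈ Icc 1 n, cartanInv n i j * v j w := by
    funext w; exact Ufun_eq n v i (by omega) w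
  rw [hU, lap_sum _ _ _ hsm z]
  have step : ∀ j ∈ Icc 1 n, cartanInv n i j * lap (v j) z
      = ∑ k ∈ Icc 1 n, -(cartanInv n i j * cartan j k * r k z) := by
    intro j hj
    rw [heq j hj z]
    have e : cartanInv n i j * -(∑ k ∈ Icc 1 n, cartan j k * r k z)
        = ∑ k ∈ Icc 1 n, -(cartanInv n i j * (cartan j k * r k z)) := by
      rw [Finset.sum_neg_distrib, ← Finset.mul_sum]
      ring
    rw [e]
    exact Finset.sum_congr rfl fun k hk => by ring
  rw [Finset.sum_congr rfl step, Finset.sum_comm]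
  have step2 : ∀ k ∈ Icc 1 n,
      (∑ j ∈ Icc 1 n, -(cartanInv n i j * cartan j k * r k z))
        = -(if i = k then r k z else 0) := by
    intro k hk
    simp only [Finset.mem_Icc] at hk
    rw [Finset.sum_neg_distrib, ← Finset.sum_mul, inv_mul_cartan n i k hi1 hi2 hk.1 hk.2]
    by_cases h : i = k
    · rw [if_pos h, if_pos h]; ring
    · rw [if_neg h, if_neg h]; ring
  rw [Finset.sum_congr rfl step2, Finset.sum_neg_distrib, Finset.sum_ite_eq,
      if_pos (by simp only [Finset.mem_Icc]; omega)]

lemma sum_Icc_one (f : ℕ → ℂ) (n : ℕ) :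
    ∑ i ∈ Icc 1 n, f i = ∑ i ∈ Finset.range n, f (i+1) := by
  rw [← Finset.Ico_add_one_right_eq_Icc, Finset.sum_Ico_eq_sum_range]
  simp [Nat.add_comm]

lemma final_sum (n : ℕ) (hn : 1 ≤ n) (A B : ℕ → ℂ) (hA : A n = 0) (hB : B 0 = 0) :
    (∑ i ∈ Icc 1 n, -(A i + B (i-1))) + ∑ i ∈ Icc 1 (n-1), (A i + B i) = 0 := by
  obtain ⟨m, rfl⟩ : ∃ m, n = m + 1 := ⟨n - 1, by omega⟩
  rw [sum_Icc_one, sum_Icc_one]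
  have e : ∀ i, -(A (i+1) + B (i+1-1)) = -(A (i+1) + B i) := by
    intro i; simp
  simp only [e]
  have splitAll : (∑ i ∈ Finset.range (m+1), -(A (i+1) + B i))
      = -(∑ i ∈ Finset.range (m+1), A (i+1)) - ∑ i ∈ Finset.range (m+1), B i := by
    rw [← Finset.sum_neg_distrib, ← Finset.sum_sub_distrib]
    exact Finset.sum_congr rfl fun i _ => by ring
  have hA' : (∑ i ∈ Finset.range (m+1), A (i+1))
      = (∑ i ∈ Finset.range m, A (i+1)) + A (m+1) := Finset.sum_range_succ _ m
  have hB' : (∑ i ∈ Finset.range (m+1), B i)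
      = (∑ i ∈ Finset.range m, B (i+1)) + B 0 := Finset.sum_range_succ' _ m
  have splitr : (∑ i ∈ Finset.range (m+1-1), (A (i+1) + B (i+1)))
      = (∑ i ∈ Finset.range m, A (i+1)) + ∑ i ∈ Finset.range m, B (i+1) := by
    simp only [Nat.add_sub_cancel]
    exact Finset.sum_add_distrib
  rw [splitAll, hA', hB', splitr, hA, hB]
  ring

lemma Ufun_contDiff {n : ℕ} {v : ℕ → ℂ → ℝ} (hsm : ∀ j ∈ Icc 1 n, ContDiff ℝ (⊤:ℕ∞) (v j))
    (i : ℕ) : ContDiff ℝ (⊤:ℕ∞) (Ufun n v i) := by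
  by_cases h : 1 ≤ i ∧ i ≤ n
  · have e : Ufun n v i = fun w => ∑ j ∈ Icc 1 n, cartanInv n i j * v j w := by
      funext w; simp [Ufun, h]
    rw [e]
    exact ContDiff.sum fun j hj => contDiff_const.mul (hsm j hj)
  · have e : Ufun n v i = fun _ => 0 := by funext w; simp [Ufun, h]
    rw [e]; exact contDiff_const

lemma UfunC_contDiff {n : ℕ} {v : ℕ → ℂ → ℝ} (hsm : ∀ j ∈ Icc 1 n, ContDiff ℝ (⊤:ℕ∞) (v j))
    (i : ℕ) : ContDiff ℝ (⊤:ℕ∞) (UfunC n v i) :=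
  ofReal_contDiff (Ufun_contDiff hsm i)

lemma UfunC_out {n : ℕ} {v : ℕ → ℂ → ℝ} {i : ℕ} (h : ¬(1 ≤ i ∧ i ≤ n)) :
    UfunC n v i = fun _ => 0 := by
  funext w; simp [UfunC, Ufun, h]

lemma castu_eq (n : ℕ) (v : ℕ → ℂ → ℝ) (i : ℕ) (hi1 : 1 ≤ i) (hi2 : i ≤ n) :
    (fun w => ((v i w : ℝ):ℂ))
      = fun w => 2 * UfunC n v i w - UfunC n v (i-1) w - UfunC n v (i+1) w := by
  funext w
  rw [show UfunC n v i w = ((Ufun n v i w : ℝ):ℂ) from rfl,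
      show UfunC n v (i-1) w = ((Ufun n v (i-1) w : ℝ):ℂ) from rfl,
      show UfunC n v (i+1) w = ((Ufun n v (i+1) w : ℝ):ℂ) from rfl,
      u_from_U n v i hi1 hi2 w]
  push_cast
  ring

lemma wdz_comb {f g h : ℂ → ℂ} {z : ℂ} (hf : DifferentiableAt ℝ f z)
    (hg : DifferentiableAt ℝ g z) (hh : DifferentiableAt ℝ h z) :
    wdz (fun w => 2 * f w - g w - h w) z = 2 * wdz f z - wdz g z - wdz h z := by
  rw [wdz_sub ((hf.const_mul 2).fun_sub hg) hh, wdz_sub (hf.const_mul 2) hg, wdz_const_mul hf 2]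

lemma wdz_wdzbar_UfunC {n : ℕ} {v : ℕ → ℂ → ℝ} (hsm : ∀ j ∈ Icc 1 n, ContDiff ℝ (⊤:ℕ∞) (v j))
    (i : ℕ) (w : ℂ) :
    wdz (wdzbar (UfunC n v i)) w = ((lap (Ufun n v i) w : ℝ):ℂ)/4 := by
  rw [show UfunC n v i = (fun w => ((Ufun n v i w : ℝ):ℂ)) from rfl]
  exact wdz_wdzbar_ofReal (Ufun_contDiff hsm i) w

theorem toda_main (n : ℕ) (hn : 1 ≤ n)
    (u : ℕ → ℂ → ℝ)
    (husm : ∀ j ∈ Finset.Icc 1 n, ContDiff ℝ (⊤ : ℕ∞) (u j))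
    (hueq0 : ∀ i ∈ Finset.Icc 1 n, ∀ z : ℂ,
      lap (u i) z + ∑ j ∈ Finset.Icc 1 n, cartan i j * Real.exp (u j z) = 0)
    (φ : ℕ → ℂ → ℝ)
    (hφsmooth : ∀ i ∈ Finset.Icc 1 n, ContDiff ℝ (⊤ : ℕ∞) (φ i))
    (hφ : ∀ i ∈ Finset.Icc 1 n, ∀ z : ℂ,
      lap (φ i) z + ∑ j ∈ Finset.Icc 1 n, cartan i j * Real.exp (u j z) * φ j z = 0) :
    ∀ z : ℂ,
      wdzbar (fun w =>
        (∑ i ∈ Finset.Icc 1 n, wdz (fun w' => wdz (UfunC n φ i) w') w)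
        - 2 * ∑ i ∈ Finset.Icc 1 n, wdz (UfunC n u i) w * wdz (UfunC n φ i) w
        + ∑ i ∈ Finset.Icc 1 (n - 1),
            (wdz (UfunC n φ i) w * wdz (UfunC n u (i + 1)) w
              + wdz (UfunC n u i) w * wdz (UfunC n φ (i + 1)) w)) z = 0 := by
  intro z
  -- PDE facts in normalized form
  have hueq : ∀ j ∈ Icc 1 n, ∀ w : ℂ,
      lap (u j) w = -(∑ k ∈ Icc 1 n, cartan j k * Real.exp (u k w)) := by
    intro j hj w
    have := hueq0 j hj w
    linarith
  have hφeq : ∀ j ∈ Icc 1 n, ∀ w : ℂ,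
      lap (φ j) w = -(∑ k ∈ Icc 1 n, cartan j k * (Real.exp (u k w) * φ k w)) := by
    intro j hj w
    have h1 := hφ j hj w
    have e : ∑ k ∈ Icc 1 n, cartan j k * Real.exp (u k w) * φ k w
        = ∑ k ∈ Icc 1 n, cartan j k * (Real.exp (u k w) * φ k w) :=
      Finset.sum_congr rfl fun k _ => by ring
    rw [e] at h1
    linarith
  -- smoothness
  have hG : ∀ i, ContDiff ℝ (⊤:ℕ∞) (UfunC n u i) := fun i => UfunC_contDiff husm i
  have hF : ∀ i, ContDiff ℝ (⊤:ℕ∞) (UfunC n φ i) := fun i => UfunC_contDiff hφsmooth i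
  have hGd : ∀ i (w : ℂ), DifferentiableAt ℝ (UfunC n u i) w :=
    fun i w => (hG i).differentiable (by decide) w
  have hFd : ∀ i (w : ℂ), DifferentiableAt ℝ (UfunC n φ i) w :=
    fun i w => (hF i).differentiable (by decide) w
  have hwG : ∀ i, ContDiff ℝ (⊤:ℕ∞) (wdz (UfunC n u i)) := fun i => wdz_contDiff (hG i)
  have hwF : ∀ i, ContDiff ℝ (⊤:ℕ∞) (wdz (UfunC n φ i)) := fun i => wdz_contDiff (hF i)
  -- pointwise second-derivative identities (function level)
  have hBfun : ∀ i, 1 ≤ i → i ≤ n → wdzbar (wdz (UfunC n φ i))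
      = fun w => -(1:ℂ)/4 * (Complex.exp (((u i w : ℝ):ℂ)) * ((φ i w : ℝ):ℂ)) := by
    intro i h1 h2
    funext w
    rw [wdzbar_wdz_comm (hF i) w, wdz_wdzbar_UfunC hφsmooth i w,
        lap_Ufun hφsmooth hφeq h1 h2 w]
    push_cast
    ring
  have hAfun : ∀ i, 1 ≤ i → i ≤ n → wdzbar (wdz (UfunC n u i))
      = fun w => -(1:ℂ)/4 * Complex.exp (((u i w : ℝ):ℂ)) := by
    intro i h1 h2
    funext w
    rw [wdzbar_wdz_comm (hG i) w, wdz_wdzbar_UfunC husm i w,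
        lap_Ufun husm hueq h1 h2 w]
    push_cast
    ring
  -- the exp atom is differentiable
  have hExpD : ∀ i, 1 ≤ i → i ≤ n → ∀ w : ℂ,
      DifferentiableAt ℝ (fun w' => Complex.exp (((u i w' : ℝ):ℂ))) w := by
    intro i h1 h2 w
    exact DifferentiableAt.cexp
      ((ofReal_contDiff (husm i (by simp only [Finset.mem_Icc]; omega))).differentiable
        (by decide) w)
  have hCastuD : ∀ i, 1 ≤ i → i ≤ n → ∀ w : ℂ,
      DifferentiableAt ℝ (fun w' => ((u i w' : ℝ):ℂ)) w := by
    intro i h1 h2 w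
    exact (ofReal_contDiff (husm i (by simp only [Finset.mem_Icc]; omega))).differentiable
      (by decide) w
  have hCastpD : ∀ i, 1 ≤ i → i ≤ n → ∀ w : ℂ,
      DifferentiableAt ℝ (fun w' => ((φ i w' : ℝ):ℂ)) w := by
    intro i h1 h2 w
    exact (ofReal_contDiff (hφsmooth i (by simp only [Finset.mem_Icc]; omega))).differentiable
      (by decide) w
  -- key identity 1 : second z-derivative terms
  have key1 : ∀ i ∈ Icc 1 n, wdzbar (wdz (wdz (UfunC n φ i))) z
      = -(1:ℂ)/4 * (Complex.exp (((u i z : ℝ):ℂ))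
          * (2 * wdz (UfunC n u i) z - wdz (UfunC n u (i-1)) z - wdz (UfunC n u (i+1)) z)
          * ((φ i z : ℝ):ℂ)
        + Complex.exp (((u i z : ℝ):ℂ))
          * (2 * wdz (UfunC n φ i) z - wdz (UfunC n φ (i-1)) z - wdz (UfunC n φ (i+1)) z)) := by
    intro i hi
    simp only [Finset.mem_Icc] at hi
    rw [wdzbar_wdz_comm (wdz_contDiff (hF i)) z, hBfun i hi.1 hi.2]
    have hprod : ∀ w : ℂ, DifferentiableAt ℝ
        (fun w' => Complex.exp (((u i w' : ℝ):ℂ)) * ((φ i w' : ℝ):ℂ)) w :=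
      fun w => (hExpD i hi.1 hi.2 w).mul (hCastpD i hi.1 hi.2 w)
    rw [wdz_const_mul (hprod z) (-(1:ℂ)/4),
        wdz_mul (hExpD i hi.1 hi.2 z) (hCastpD i hi.1 hi.2 z),
        wdz_cexp (hCastuD i hi.1 hi.2 z),
        castu_eq n u i hi.1 hi.2, castu_eq n φ i hi.1 hi.2,
        wdz_comb (hGd i z) (hGd (i-1) z) (hGd (i+1) z),
        wdz_comb (hFd i z) (hFd (i-1) z) (hFd (i+1) z)]
  -- pointwise versions
  have hApt : ∀ i, 1 ≤ i → i ≤ n → ∀ w : ℂ, wdzbar (wdz (UfunC n u i)) w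
      = -(1:ℂ)/4 * Complex.exp (((u i w : ℝ):ℂ)) := by
    intro i h1 h2 w
    rw [hAfun i h1 h2]
  have hBpt : ∀ i, 1 ≤ i → i ≤ n → ∀ w : ℂ, wdzbar (wdz (UfunC n φ i)) w
      = -(1:ℂ)/4 * (Complex.exp (((u i w : ℝ):ℂ)) * ((φ i w : ℝ):ℂ)) := by
    intro i h1 h2 w
    rw [hBfun i h1 h2]
  -- key identity 2 : first-order cross terms
  have key2 : ∀ i ∈ Icc 1 n, wdzbar (fun w => wdz (UfunC n u i) w * wdz (UfunC n φ i) w) z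
      = -(1:ℂ)/4 * Complex.exp (((u i z : ℝ):ℂ)) * wdz (UfunC n φ i) z
        + wdz (UfunC n u i) z
          * (-(1:ℂ)/4 * (Complex.exp (((u i z : ℝ):ℂ)) * ((φ i z : ℝ):ℂ))) := by
    intro i hi
    simp only [Finset.mem_Icc] at hi
    rw [wdzbar_mul ((hwG i).differentiable (by decide) z) ((hwF i).differentiable (by decide) z),
        hApt i hi.1 hi.2 z, hBpt i hi.1 hi.2 z]
  -- key identity 3 : the shifted cross terms
  have key3 : ∀ i ∈ Icc 1 (n-1), wdzbar (fun w =>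
        wdz (UfunC n φ i) w * wdz (UfunC n u (i+1)) w
          + wdz (UfunC n u i) w * wdz (UfunC n φ (i+1)) w) z
      = (-(1:ℂ)/4 * (Complex.exp (((u i z : ℝ):ℂ)) * ((φ i z : ℝ):ℂ)))
            * wdz (UfunC n u (i+1)) z
          + wdz (UfunC n φ i) z * (-(1:ℂ)/4 * Complex.exp (((u (i+1) z : ℝ):ℂ)))
        + ((-(1:ℂ)/4 * Complex.exp (((u i z : ℝ):ℂ))) * wdz (UfunC n φ (i+1)) z
          + wdz (UfunC n u i) z
            * (-(1:ℂ)/4 * (Complex.exp (((u (i+1) z : ℝ):ℂ)) * ((φ (i+1) z : ℝ):ℂ)))) := by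
    intro i hi
    simp only [Finset.mem_Icc] at hi
    have hi1 : 1 ≤ i := hi.1
    have hi2 : i ≤ n := by omega
    have hi3 : i + 1 ≤ n := by omega
    rw [wdzbar_add (((hwF i).mul (hwG (i+1))).differentiable (by decide) z)
          (((hwG i).mul (hwF (i+1))).differentiable (by decide) z),
        wdzbar_mul ((hwF i).differentiable (by decide) z) ((hwG (i+1)).differentiable (by decide) z),
        wdzbar_mul ((hwG i).differentiable (by decide) z) ((hwF (i+1)).differentiable (by decide) z),
        hBpt i hi1 hi2 z, hApt (i+1) (by omega) hi3 z,
        hApt i hi1 hi2 z, hBpt (i+1) (by omega) hi3 z]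
  -- boundary vanishing
  have haTop : wdz (UfunC n u (n+1)) z = 0 := by
    rw [UfunC_out (by omega)]; exact wdz_const 0 z
  have hbTop : wdz (UfunC n φ (n+1)) z = 0 := by
    rw [UfunC_out (by omega)]; exact wdz_const 0 z
  have ha0 : wdz (UfunC n u 0) z = 0 := by
    rw [UfunC_out (by omega)]; exact wdz_const 0 z
  have hb0 : wdz (UfunC n φ 0) z = 0 := by
    rw [UfunC_out (by omega)]; exact wdz_const 0 z
  -- abstract the two sequences appearing in the final cancellation
  obtain ⟨A, hA⟩ : ∃ A : ℕ → ℂ, A = fun i =>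
      Complex.exp (((u i z : ℝ):ℂ)) * wdz (UfunC n u (i+1)) z * ((φ i z : ℝ):ℂ)
        + Complex.exp (((u i z : ℝ):ℂ)) * wdz (UfunC n φ (i+1)) z := ⟨_, rfl⟩
  obtain ⟨B, hB⟩ : ∃ B : ℕ → ℂ, B = fun j =>
      Complex.exp (((u (j+1) z : ℝ):ℂ)) * wdz (UfunC n u j) z * ((φ (j+1) z : ℝ):ℂ)
        + Complex.exp (((u (j+1) z : ℝ):ℂ)) * wdz (UfunC n φ j) z := ⟨_, rfl⟩
  have hAn : A n = 0 := by
    simp only [hA, haTop, hbTop]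
    ring
  have hB0 : B 0 = 0 := by
    simp only [hB, ha0, hb0]
    ring
  have hfin := final_sum n hn A B hAn hB0
  -- combined per-index identities
  have c1 : ∀ i ∈ Icc 1 n,
      wdzbar (wdz (wdz (UfunC n φ i))) z
        - 2 * wdzbar (fun w => wdz (UfunC n u i) w * wdz (UfunC n φ i) w) z
      = (-(1:ℂ)/4) * -(A i + B (i-1)) := by
    intro i hi
    rw [key1 i hi, key2 i hi]
    simp only [Finset.mem_Icc] at hi
    have e1 : i - 1 + 1 = i := by omega
    simp only [hA, hB, e1]
    ring
  have c3 : ∀ i ∈ Icc 1 (n-1),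
      wdzbar (fun w =>
        wdz (UfunC n φ i) w * wdz (UfunC n u (i+1)) w
          + wdz (UfunC n u i) w * wdz (UfunC n φ (i+1)) w) z
      = (-(1:ℂ)/4) * (A i + B i) := by
    intro i hi
    rw [key3 i hi]
    simp only [hA, hB]
    ring
  -- smoothness of the three sums
  have hS1sm : ContDiff ℝ (⊤:ℕ∞)
      (fun w => ∑ i ∈ Icc 1 n, wdz (wdz (UfunC n φ i)) w) :=
    ContDiff.sum fun i _ => wdz_contDiff (wdz_contDiff (hF i))
  have hS2sm : ContDiff ℝ (⊤:ℕ∞)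
      (fun w => ∑ i ∈ Icc 1 n, wdz (UfunC n u i) w * wdz (UfunC n φ i) w) :=
    ContDiff.sum fun i _ => (hwG i).mul (hwF i)
  have hS3sm : ContDiff ℝ (⊤:ℕ∞)
      (fun w => ∑ i ∈ Icc 1 (n-1),
        (wdz (UfunC n φ i) w * wdz (UfunC n u (i+1)) w
          + wdz (UfunC n u i) w * wdz (UfunC n φ (i+1)) w)) :=
    ContDiff.sum fun i _ => ((hwF i).mul (hwG (i+1))).add ((hwG i).mul (hwF (i+1)))
  -- outer linearity
  rw [wdzbar_add ((hS1sm.sub (contDiff_const.mul hS2sm)).differentiable (by decide) z)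
        (hS3sm.differentiable (by decide) z),
      wdzbar_sub (hS1sm.differentiable (by decide) z)
        ((contDiff_const.mul hS2sm).differentiable (by decide) z),
      wdzbar_const_mul (hS2sm.differentiable (by decide) z) 2,
      wdzbar_sum (Icc 1 n) (fun i => wdz (wdz (UfunC n φ i)))
        (fun i _ => (wdz_contDiff (wdz_contDiff (hF i))).differentiable (by decide) z),
      wdzbar_sum (Icc 1 n) (fun i => fun w => wdz (UfunC n u i) w * wdz (UfunC n φ i) w)
        (fun i _ => ((hwG i).mul (hwF i)).differentiable (by decide) z),
      wdzbar_sum (Icc 1 (n-1)) (fun i => fun w =>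
          wdz (UfunC n φ i) w * wdz (UfunC n u (i+1)) w
            + wdz (UfunC n u i) w * wdz (UfunC n φ (i+1)) w)
        (fun i _ => (((hwF i).mul (hwG (i+1))).add
            ((hwG i).mul (hwF (i+1)))).differentiable (by decide) z)]
  rw [Finset.mul_sum, ← Finset.sum_sub_distrib,
      Finset.sum_congr rfl c1, Finset.sum_congr rfl c3,
      ← Finset.mul_sum (Icc 1 n) (fun i => -(A i + B (i-1))) (-(1:ℂ)/4),
      ← Finset.mul_sum (Icc 1 (n-1)) (fun i => (A i + B i)) (-(1:ℂ)/4),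
      ← mul_add, hfin, mul_zero]

/-- Let `(u_i)` solve the `SU(n+1)` Toda system without sources and
let `(φ_i)` be smooth solutions of the linearized system. With
`Φ_i = Σ_j a^{ij} φ_j` (and `Φ_0 = Φ_{n+1} = 0`), the quantity
`Y = Σ_i ∂_z² Φ_i − 2 Σ_i (∂_z U_i)(∂_z Φ_i) + Σ_{i=1}^{n−1} [(∂_z Φ_i)(∂_z U_{i+1}) + (∂_z U_i)(∂_z Φ_{i+1})]`
satisfies `∂_z̄ Y = 0` on `ℝ²`, i.e. `Y` is entire holomorphic. -/
theorem toda_linearized_invariant_holomorphic (n : ℕ) (hn : 1 ≤ n)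
    (u : ℕ → ℂ → ℝ) (hu : IsTodaSolution n u)
    (φ : ℕ → ℂ → ℝ)
    (hφsmooth : ∀ i ∈ Finset.Icc 1 n, ContDiff ℝ (⊤ : ℕ∞) (φ i))
    (hφ : ∀ i ∈ Finset.Icc 1 n, ∀ z : ℂ,
      lap (φ i) z + ∑ j ∈ Finset.Icc 1 n, cartan i j * Real.exp (u j z) * φ j z = 0) :
    ∀ z : ℂ,
      wdzbar (fun w =>
        (∑ i ∈ Finset.Icc 1 n, wdz (fun w' => wdz (UfunC n φ i) w') w)
        - 2 * ∑ i ∈ Finset.Icc 1 n, wdz (UfunC n u i) w * wdz (UfunC n φ i) w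
        + ∑ i ∈ Finset.Icc 1 (n - 1),
            (wdz (UfunC n φ i) w * wdz (UfunC n u (i + 1)) w
              + wdz (UfunC n u i) w * wdz (UfunC n φ (i + 1)) w)) z = 0 := by
  intro z
  exact toda_main n hn u (fun i hi => (hu i hi).1) (fun i hi => (hu i hi).2.1) φ hφsmooth hφ z
end
end

section
/- Let f be a smooth complex-valued function on an open subset of ℂ. Then for every k ≥ 1, det_{k+1}(f) · det_{k−1}(f) = det_k(f) · ∂_z∂_{z̄}(det_k(f)) − ∂_z(det_k(f)) · ∂_{z̄}(det_k(f)). -/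
open Complex Finset MeasureTheory

noncomputable section

namespace DetkAux

open Matrix Finset


variable {R : Type*} [CommRing R]

/-- The auxiliary matrix: identity in the first block of columns, adjugate columns in the
last two columns. -/
def Cmat {n : ℕ} (B : Matrix (Fin n ⊕ Fin 2) (Fin n ⊕ Fin 2) R) :
    Matrix (Fin n ⊕ Fin 2) (Fin n ⊕ Fin 2) R :=
  fromBlocks 1 (Matrix.of fun i j => adjugate B (Sum.inl i) (Sum.inr j)) 0
    (Matrix.of fun i j => adjugate B (Sum.inr i) (Sum.inr j))

lemma mul_Cmat {n : ℕ} (B : Matrix (Fin n ⊕ Fin 2) (Fin n ⊕ Fin 2) R) :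
    B * Cmat B =
      fromBlocks (B.submatrix Sum.inl Sum.inl) 0 (B.submatrix Sum.inr Sum.inl)
        (B.det • (1 : Matrix (Fin 2) (Fin 2) R)) := by
  have hadj : B * B.adjugate = B.det • 1 := mul_adjugate B
  ext i j
  rcases j with j | j
  · rcases i with i | i <;>
      simp [Cmat, Matrix.mul_apply, Fintype.sum_sum_type, fromBlocks, Matrix.one_apply,
        mul_ite, mul_one, mul_zero]
  · have h : (B * B.adjugate) i (Sum.inr j) = (B.det • (1 : Matrix (Fin n ⊕ Fin 2) (Fin n ⊕ Fin 2) R)) i (Sum.inr j) := by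
      rw [hadj]
    rw [Matrix.mul_apply] at h
    rcases i with i | i <;>
      · simp only [Cmat, Matrix.mul_apply, Fintype.sum_sum_type, fromBlocks_apply₁₂,
          fromBlocks_apply₂₂, fromBlocks_apply₁₁, fromBlocks_apply₂₁, Matrix.of_apply] at h ⊢
        rw [h]
        simp [Matrix.one_apply, Matrix.smul_apply]

lemma det_Cmat {n : ℕ} (B : Matrix (Fin n ⊕ Fin 2) (Fin n ⊕ Fin 2) R) :
    (Cmat B).det =
      adjugate B (Sum.inr 0) (Sum.inr 0) * adjugate B (Sum.inr 1) (Sum.inr 1) -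
        adjugate B (Sum.inr 0) (Sum.inr 1) * adjugate B (Sum.inr 1) (Sum.inr 0) := by
  rw [Cmat, det_fromBlocks_zero₂₁, det_one, one_mul, det_fin_two]
  rfl

lemma step1 {n : ℕ} (B : Matrix (Fin n ⊕ Fin 2) (Fin n ⊕ Fin 2) R) :
    B.det * (Cmat B).det = B.det ^ 2 * (B.submatrix Sum.inl Sum.inl).det := by
  rw [← det_mul, mul_Cmat, det_fromBlocks_zero₁₂, det_smul, det_one]
  simp [Fintype.card_fin]
  ring

lemma dj_sum {n : ℕ} (B : Matrix (Fin n ⊕ Fin 2) (Fin n ⊕ Fin 2) ℂ) :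
    adjugate B (Sum.inr 0) (Sum.inr 0) * adjugate B (Sum.inr 1) (Sum.inr 1) -
      adjugate B (Sum.inr 0) (Sum.inr 1) * adjugate B (Sum.inr 1) (Sum.inr 0) =
    B.det * (B.submatrix Sum.inl Sum.inl).det := by
  classical
  let ι := (Fin n ⊕ Fin 2)
  let X : Matrix ι ι (MvPolynomial (ι × ι) ℤ) := mvPolynomialX ι ι ℤ
  have hX : (Cmat X).det = X.det * (X.submatrix Sum.inl Sum.inl).det := by
    apply mul_left_cancel₀ (det_mvPolynomialX_ne_zero ι ℤ)
    rw [step1 X]; ring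
  rw [det_Cmat] at hX
  let φ : MvPolynomial (ι × ι) ℤ →+* ℂ :=
    (MvPolynomial.eval₂Hom (Int.castRingHom ℂ) fun p : ι × ι => B p.1 p.2)
  have hmap : φ.mapMatrix X = B := mvPolynomialX_map_eval₂ (Int.castRingHom ℂ) B
  have := congrArg φ hX
  rw [map_sub, _root_.map_mul, _root_.map_mul] at this
  have hadj : ∀ i j : ι, φ (adjugate X i j) = adjugate B i j := by
    intro i j
    have h := RingHom.map_adjugate φ X
    have := congrFun (congrFun h i) j
    simpa [hmap] using this
  have hdet : φ X.det = B.det := by rw [RingHom.map_det, hmap]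
  have hdet2 : φ (X.submatrix Sum.inl Sum.inl).det = (B.submatrix Sum.inl Sum.inl).det := by
    rw [RingHom.map_det]
    congr 1
    ext i j
    have := congrFun (congrFun hmap (Sum.inl i)) (Sum.inl j)
    simpa using this
  rw [_root_.map_mul, hdet, hdet2] at this
  simp only [hadj] at this
  exact this





lemma dj_fin (n : ℕ) (A : Matrix (Fin (n + 2)) (Fin (n + 2)) ℂ) :
    A.det * (A.submatrix (fun i : Fin n => i.castSucc.castSucc)
        (fun i : Fin n => i.castSucc.castSucc)).det =
      (A.submatrix Fin.castSucc Fin.castSucc).det *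
          (A.submatrix ((Fin.last n).castSucc).succAbove ((Fin.last n).castSucc).succAbove).det -
        (A.submatrix ((Fin.last n).castSucc).succAbove Fin.castSucc).det *
          (A.submatrix Fin.castSucc ((Fin.last n).castSucc).succAbove).det := by
  classical
  have h := dj_sum (A.submatrix (finSumFinEquiv : Fin n ⊕ Fin 2 ≃ Fin (n + 2))
    (finSumFinEquiv : Fin n ⊕ Fin 2 ≃ Fin (n + 2)))
  have hdetB : (A.submatrix (finSumFinEquiv : Fin n ⊕ Fin 2 ≃ Fin (n + 2))
      (finSumFinEquiv : Fin n ⊕ Fin 2 ≃ Fin (n + 2))).det = A.det :=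
    det_submatrix_equiv_self _ A
  have hsmall : ((A.submatrix (finSumFinEquiv : Fin n ⊕ Fin 2 ≃ Fin (n + 2))
        (finSumFinEquiv : Fin n ⊕ Fin 2 ≃ Fin (n + 2))).submatrix Sum.inl Sum.inl) =
      A.submatrix (fun i : Fin n => i.castSucc.castSucc) (fun i : Fin n => i.castSucc.castSucc) := by
    rw [submatrix_submatrix]
    congr 1 <;> · funext i; exact Fin.ext (by simp)
  have hadjB : ∀ r c : Fin 2, (A.submatrix (finSumFinEquiv : Fin n ⊕ Fin 2 ≃ Fin (n + 2))
        (finSumFinEquiv : Fin n ⊕ Fin 2 ≃ Fin (n + 2))).adjugate (Sum.inr r) (Sum.inr c) =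
      A.adjugate (finSumFinEquiv (Sum.inr r)) (finSumFinEquiv (Sum.inr c)) := by
    intro r c
    rw [adjugate_submatrix_equiv_self]
    rfl
  have he0 : (finSumFinEquiv (Sum.inr (0 : Fin 2)) : Fin (n + 2)) = (Fin.last n).castSucc :=
    Fin.ext (by simp)
  have he1 : (finSumFinEquiv (Sum.inr (1 : Fin 2)) : Fin (n + 2)) = Fin.last (n + 1) :=
    Fin.ext (by simp)
  rw [hdetB, hsmall, hadjB, hadjB, hadjB, hadjB, he0, he1] at h
  rw [← h]
  have hA : ∀ i j : Fin (n + 2), A.adjugate i j =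
      (-1 : ℂ) ^ ((j : ℕ) + (i : ℕ)) * (A.submatrix j.succAbove i.succAbove).det :=
    fun i j => adjugate_fin_succ_eq_det_submatrix A i j
  rw [hA, hA, hA, hA]
  have hvp : (((Fin.last n).castSucc : Fin (n + 2)) : ℕ) = n := by simp
  have hvq : ((Fin.last (n + 1) : Fin (n + 2)) : ℕ) = n + 1 := by simp
  have hlast : (Fin.last (n + 1)).succAbove = Fin.castSucc := Fin.succAbove_last
  rw [hvp, hvq, hlast]
  have h1 : (-1 : ℂ) ^ (n + n) = 1 := Even.neg_one_pow ⟨n, rfl⟩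
  have h2 : (-1 : ℂ) ^ (n + 1 + (n + 1)) = 1 := Even.neg_one_pow ⟨n + 1, rfl⟩
  have h3 : (-1 : ℂ) ^ (n + 1 + n) * (-1 : ℂ) ^ (n + (n + 1)) = 1 := by
    rw [← pow_add]
    exact Even.neg_one_pow ⟨2 * n + 1, by ring⟩
  rw [h1, h2]
  have h4 : (-1 : ℂ) ^ (n * 4) = 1 := Even.neg_one_pow ⟨n * 2, by ring⟩
  linear_combination ((A.submatrix Fin.castSucc ((Fin.last n).castSucc).succAbove).det *
      (A.submatrix ((Fin.last n).castSucc).succAbove Fin.castSucc).det) * h3 -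
    (2 * (A.submatrix Fin.castSucc ((Fin.last n).castSucc).succAbove).det *
      (A.submatrix ((Fin.last n).castSucc).succAbove Fin.castSucc).det) * h4



open Matrix Finset

/-- A general Wirtinger-type operator: `wdz = wd (-I)`, `wdzbar = wd I`. -/
def wd (c : ℂ) (g : ℂ → ℂ) (z : ℂ) : ℂ :=
  (fderiv ℝ g z 1 + c * fderiv ℝ g z Complex.I) / 2

lemma wdz_eq (g : ℂ → ℂ) : wdz g = wd (-Complex.I) g := by
  funext z; simp only [wdz, wd]; ring

lemma wdzbar_eq (g : ℂ → ℂ) : wdzbar g = wd Complex.I g := rfl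

variable {z c : ℂ}

lemma coe_add_one_le_top (m : ℕ∞) :
    ((m : WithTop ℕ∞)) + 1 ≤ ((⊤ : ℕ∞) : WithTop ℕ∞) := by
  have h : ((m : WithTop ℕ∞)) + ((1 : ℕ∞) : WithTop ℕ∞) ≤ ((⊤ : ℕ∞) : WithTop ℕ∞) := by
    rw [← WithTop.coe_add]
    exact WithTop.coe_le_coe.mpr le_top
  exact h

lemma wd_congr {g h : ℂ → ℂ} (c : ℂ) (hgh : g =ᶠ[nhds z] h) : wd c g z = wd c h z := by
  unfold wd; rw [hgh.fderiv_eq]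

lemma wd_const (a : ℂ) : wd c (fun _ => a) z = 0 := by simp [wd]

lemma wd_sum {ι : Type*} (s : Finset ι) (g : ι → ℂ → ℂ)
    (h : ∀ i ∈ s, DifferentiableAt ℝ (g i) z) :
    wd c (fun w => ∑ i ∈ s, g i w) z = ∑ i ∈ s, wd c (g i) z := by
  unfold wd
  rw [fderiv_fun_sum h]
  simp only [ContinuousLinearMap.sum_apply]
  rw [Finset.mul_sum, ← Finset.sum_add_distrib, Finset.sum_div]

lemma wd_const_mul {g : ℂ → ℂ} (a : ℂ) (hg : DifferentiableAt ℝ g z) :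
    wd c (fun w => a * g w) z = a * wd c g z := by
  unfold wd
  rw [fderiv_const_mul hg a]
  simp only [ContinuousLinearMap.smul_apply, smul_eq_mul]
  ring

lemma wd_mul {g h : ℂ → ℂ} (hg : DifferentiableAt ℝ g z) (hh : DifferentiableAt ℝ h z) :
    wd c (fun w => g w * h w) z = wd c g z * h z + g z * wd c h z := by
  unfold wd
  rw [fderiv_fun_mul hg hh]
  simp only [ContinuousLinearMap.add_apply, ContinuousLinearMap.smul_apply, smul_eq_mul]
  ring

lemma wd_prod {ι : Type*} [DecidableEq ι] (s : Finset ι) (g : ι → ℂ → ℂ)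
    (h : ∀ i ∈ s, DifferentiableAt ℝ (g i) z) :
    wd c (fun w => ∏ i ∈ s, g i w) z
      = ∑ i ∈ s, (∏ j ∈ s.erase i, g j z) * wd c (g i) z := by
  classical
  induction s using Finset.induction_on with
  | empty => simpa using wd_const (c := c) (z := z) 1
  | @insert a s ha ih =>
    have hga : DifferentiableAt ℝ (g a) z := h a (Finset.mem_insert_self a s)
    have hs : ∀ i ∈ s, DifferentiableAt ℝ (g i) z := fun i hi => h i (Finset.mem_insert_of_mem hi)
    have hprod : DifferentiableAt ℝ (fun w => ∏ i ∈ s, g i w) z :=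
      (HasFDerivAt.finset_prod (fun i hi => (hs i hi).hasFDerivAt)).differentiableAt
    have heq : (fun w => ∏ i ∈ insert a s, g i w) = fun w => g a w * ∏ i ∈ s, g i w := by
      funext w; rw [Finset.prod_insert ha]
    have hsum : ∑ i ∈ s, (∏ j ∈ (insert a s).erase i, g j z) * wd c (g i) z
        = ∑ i ∈ s, g a z * ((∏ j ∈ s.erase i, g j z) * wd c (g i) z) := by
      refine Finset.sum_congr rfl fun i hi => ?_
      have hia : a ≠ i := fun hh => ha (hh ▸ hi)
      rw [Finset.erase_insert_of_ne (Ne.symm hia).symm]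
      rw [Finset.prod_insert (fun hmem => ha (Finset.mem_of_mem_erase hmem))]
      ring
    rw [heq, wd_mul hga hprod, ih hs, Finset.sum_insert ha, Finset.erase_insert ha, hsum,
      ← Finset.mul_sum]
    ring

lemma hasFDerivAt_applyDeriv {g : ℂ → ℂ} (hg : ContDiffAt ℝ (⊤ : ℕ∞) g z) (v : ℂ) :
    HasFDerivAt (fun w => fderiv ℝ g w v)
      ((ContinuousLinearMap.apply ℝ ℂ v).comp (fderiv ℝ (fderiv ℝ g) z)) z := by
  have hB : DifferentiableAt ℝ (fderiv ℝ g) z :=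
    (hg.fderiv_right (m := 1) (coe_add_one_le_top 1)).differentiableAt (by norm_num)
  exact ((ContinuousLinearMap.apply ℝ ℂ v).hasFDerivAt).comp z hB.hasFDerivAt

lemma wd_hasFDerivAt {g : ℂ → ℂ} (hg : ContDiffAt ℝ (⊤ : ℕ∞) g z) (c : ℂ) :
    HasFDerivAt (wd c g)
      ((2⁻¹ : ℂ) • (((ContinuousLinearMap.apply ℝ ℂ 1).comp (fderiv ℝ (fderiv ℝ g) z)) +
        c • ((ContinuousLinearMap.apply ℝ ℂ Complex.I).comp (fderiv ℝ (fderiv ℝ g) z)))) z := by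
  have h1 := hasFDerivAt_applyDeriv hg 1
  have hI := hasFDerivAt_applyDeriv hg Complex.I
  have hN := h1.add (hI.const_mul c)
  have hN2 := hN.const_mul (2⁻¹ : ℂ)
  have heq : (fun w => (2⁻¹:ℂ) * ((fun w => fderiv ℝ g w 1) w + c * (fun w => fderiv ℝ g w Complex.I) w))
      = wd c g := by
    funext w; simp only [wd]; ring
  rw [← heq]
  exact hN2

lemma wd_differentiableAt {g : ℂ → ℂ} (hg : ContDiffAt ℝ (⊤ : ℕ∞) g z) (c : ℂ) :
    DifferentiableAt ℝ (wd c g) z := (wd_hasFDerivAt hg c).differentiableAt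

lemma fderiv_wd_apply {g : ℂ → ℂ} (hg : ContDiffAt ℝ (⊤ : ℕ∞) g z) (c u : ℂ) :
    fderiv ℝ (wd c g) z u =
      (fderiv ℝ (fderiv ℝ g) z u 1 + c * fderiv ℝ (fderiv ℝ g) z u Complex.I) / 2 := by
  rw [(wd_hasFDerivAt hg c).fderiv]
  simp only [ContinuousLinearMap.smul_apply, ContinuousLinearMap.add_apply,
    ContinuousLinearMap.coe_comp', Function.comp_apply, ContinuousLinearMap.apply_apply,
    smul_eq_mul]
  ring

lemma wd_comm {g : ℂ → ℂ} (hg : ContDiffAt ℝ (⊤ : ℕ∞) g z) (c c' : ℂ) :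
    wd c' (wd c g) z = wd c (wd c' g) z := by
  have hsymm : fderiv ℝ (fderiv ℝ g) z 1 Complex.I = fderiv ℝ (fderiv ℝ g) z Complex.I 1 :=
    (hg.isSymmSndFDerivAt (by
      have h := coe_add_one_le_top 1
      norm_num at h ⊢
      exact h)).eq 1 Complex.I
  show (fderiv ℝ (wd c g) z 1 + c' * fderiv ℝ (wd c g) z Complex.I) / 2
      = (fderiv ℝ (wd c' g) z 1 + c * fderiv ℝ (wd c' g) z Complex.I) / 2
  rw [fderiv_wd_apply hg c 1, fderiv_wd_apply hg c Complex.I, fderiv_wd_apply hg c' 1,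
    fderiv_wd_apply hg c' Complex.I]
  linear_combination ((c - c') / 4) * hsymm

lemma wd_contDiffOn {Ω : Set ℂ} (hΩ : IsOpen Ω) {g : ℂ → ℂ}
    (hg : ContDiffOn ℝ (⊤ : ℕ∞) g Ω) (c : ℂ) : ContDiffOn ℝ (⊤ : ℕ∞) (wd c g) Ω := by
  have h' : ContDiffOn ℝ (⊤ : ℕ∞) (fderiv ℝ g) Ω := hg.fderiv_of_isOpen hΩ (by simp)
  have h1 : ContDiffOn ℝ (⊤ : ℕ∞) (fun w => fderiv ℝ g w 1) Ω :=
    (ContinuousLinearMap.apply ℝ ℂ (1 : ℂ)).contDiff.comp_contDiffOn h'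
  have hI : ContDiffOn ℝ (⊤ : ℕ∞) (fun w => fderiv ℝ g w Complex.I) Ω :=
    (ContinuousLinearMap.apply ℝ ℂ (Complex.I : ℂ)).contDiff.comp_contDiffOn h'
  exact (h1.add (contDiffOn_const.mul hI)).div_const 2

lemma wd_det {m : ℕ} (M : Fin m → Fin m → ℂ → ℂ)
    (h : ∀ p q, DifferentiableAt ℝ (M p q) z) :
    wd c (fun w => Matrix.det (Matrix.of fun p q => M p q w)) z
      = ∑ j : Fin m, Matrix.det (Matrix.of fun p q =>
          if q = j then wd c (M p q) z else M p q z) := by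
  classical
  have hdet : (fun w => Matrix.det (Matrix.of fun p q => M p q w))
      = fun w => ∑ σ : Equiv.Perm (Fin m),
          ((Equiv.Perm.sign σ : ℤ) : ℂ) * ∏ i, M (σ i) i w := by
    funext w; rw [Matrix.det_apply']; rfl
  have hprodDiff : ∀ σ : Equiv.Perm (Fin m),
      DifferentiableAt ℝ (fun w => ∏ i, M (σ i) i w) z :=
    fun σ => (HasFDerivAt.finset_prod (fun i _ => (h (σ i) i).hasFDerivAt)).differentiableAt
  rw [hdet, wd_sum _ _ (fun σ _ => (hprodDiff σ).const_mul _)]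
  have hterm : ∀ σ : Equiv.Perm (Fin m),
      wd c (fun w => ((Equiv.Perm.sign σ : ℤ) : ℂ) * ∏ i, M (σ i) i w) z
        = ((Equiv.Perm.sign σ : ℤ) : ℂ) *
            ∑ j, (∏ i ∈ Finset.univ.erase j, M (σ i) i z) * wd c (M (σ j) j) z := by
    intro σ
    rw [wd_const_mul _ (hprodDiff σ), wd_prod _ _ (fun i _ => h (σ i) i)]
  have hR : ∀ j : Fin m,
      Matrix.det (Matrix.of fun p q => if q = j then wd c (M p q) z else M p q z)
        = ∑ σ : Equiv.Perm (Fin m), ((Equiv.Perm.sign σ : ℤ) : ℂ) *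
            ((∏ i ∈ Finset.univ.erase j, M (σ i) i z) * wd c (M (σ j) j) z) := by
    intro j
    rw [Matrix.det_apply']
    refine Finset.sum_congr rfl fun σ _ => ?_
    congr 1
    have hsplit := (Finset.mul_prod_erase Finset.univ
      (fun i => (Matrix.of fun p q => if q = j then wd c (M p q) z else M p q z) (σ i) i)
      (Finset.mem_univ j)).symm
    rw [hsplit]
    simp only [Matrix.of_apply, if_pos rfl]
    rw [mul_comm]
    congr 1
    exact Finset.prod_congr rfl fun i hi => if_neg (Finset.ne_of_mem_erase hi)
  simp only [hterm, hR]
  rw [Finset.sum_comm]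
  simp only [Finset.mul_sum]

lemma wd_det_row {m : ℕ} (M : Fin m → Fin m → ℂ → ℂ)
    (h : ∀ p q, DifferentiableAt ℝ (M p q) z) :
    wd c (fun w => Matrix.det (Matrix.of fun p q => M p q w)) z
      = ∑ i : Fin m, Matrix.det (Matrix.of fun p q =>
          if p = i then wd c (M p q) z else M p q z) := by
  classical
  have htr : (fun w => Matrix.det (Matrix.of fun p q => M p q w))
      = fun w => Matrix.det (Matrix.of fun p q => M q p w) := by
    funext w
    rw [← Matrix.det_transpose]
    congr 1
  rw [htr, wd_det (fun p q => M q p) (fun p q => h q p)]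
  refine Finset.sum_congr rfl fun i _ => ?_
  rw [← Matrix.det_transpose]
  congr 1

/-! ### The matrix entries `∂_z^p ∂_z̄^q f` -/

def gg (f : ℂ → ℂ) (p q : ℕ) : ℂ → ℂ := wdz^[p] (wdzbar^[q] f)

lemma gg_succ_left (f : ℂ → ℂ) (p q : ℕ) : gg f (p + 1) q = wdz (gg f p q) := by
  unfold gg
  rw [Function.iterate_succ']
  rfl

lemma gg_zero_succ (f : ℂ → ℂ) (q : ℕ) : gg f 0 (q + 1) = wdzbar (gg f 0 q) := by
  unfold gg
  simp only [Function.iterate_zero, id_eq]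
  exact Function.iterate_succ_apply' wdzbar q f

variable {Ω : Set ℂ} {f : ℂ → ℂ} {z : ℂ}

lemma one_le_inftop : (1 : WithTop ℕ∞) ≤ ((⊤ : ℕ∞) : WithTop ℕ∞) :=
  WithTop.coe_le_coe.mpr le_top

lemma gg_contDiffOn (hΩ : IsOpen Ω) (hf : ContDiffOn ℝ (⊤ : ℕ∞) f Ω) (p q : ℕ) :
    ContDiffOn ℝ (⊤ : ℕ∞) (gg f p q) Ω := by
  induction p with
  | zero =>
    induction q with
    | zero => exact hf
    | succ q ih =>
      rw [gg_zero_succ, wdzbar_eq]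
      exact wd_contDiffOn hΩ ih _
  | succ p ih =>
    rw [gg_succ_left, wdz_eq]
    exact wd_contDiffOn hΩ ih _

lemma gg_diffAt (hΩ : IsOpen Ω) (hf : ContDiffOn ℝ (⊤ : ℕ∞) f Ω) (p q : ℕ) (hz : z ∈ Ω) :
    DifferentiableAt ℝ (gg f p q) z :=
  ((gg_contDiffOn hΩ hf p q).contDiffAt (hΩ.mem_nhds hz)).differentiableAt (by simp)

lemma gg_wdz (f : ℂ → ℂ) (p q : ℕ) (z : ℂ) :
    wd (-Complex.I) (gg f p q) z = gg f (p + 1) q z := by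
  rw [gg_succ_left, wdz_eq]

lemma gg_wdzbar (hΩ : IsOpen Ω) (hf : ContDiffOn ℝ (⊤ : ℕ∞) f Ω) (p q : ℕ) (hz : z ∈ Ω) :
    wd Complex.I (gg f p q) z = gg f p (q + 1) z := by
  induction p generalizing z with
  | zero =>
    rw [← wdzbar_eq, gg_zero_succ]
  | succ p ih =>
    have hsm : ContDiffAt ℝ (⊤ : ℕ∞) (gg f p q) z :=
      (gg_contDiffOn hΩ hf p q).contDiffAt (hΩ.mem_nhds hz)
    rw [gg_succ_left, wdz_eq, wd_comm hsm (-Complex.I) Complex.I]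
    have hev : wd Complex.I (gg f p q) =ᶠ[nhds z] gg f p (q + 1) :=
      Filter.eventuallyEq_of_mem (hΩ.mem_nhds hz) (fun w hw => ih hw)
    rw [wd_congr (-Complex.I) hev, gg_succ_left, wdz_eq]

/-! ### Index arithmetic -/

lemma val_pSA {n : ℕ} (q : Fin (n + 1)) :
    ((((Fin.last n).castSucc).succAbove q : Fin (n + 2)) : ℕ)
      = if (q : ℕ) = n then n + 1 else (q : ℕ) := by
  by_cases hq : (q : ℕ) = n
  · rw [if_pos hq]
    have h1 : ¬ (q.castSucc < (Fin.last n).castSucc) := by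
      simp [Fin.lt_def, hq]
    rw [Fin.succAbove, if_neg h1]
    simpa using hq
  · rw [if_neg hq]
    have hlt : (q : ℕ) < n := lt_of_le_of_ne (Nat.lt_succ_iff.mp q.isLt) hq
    have h1 : q.castSucc < (Fin.last n).castSucc := by
      simp [Fin.lt_def, hlt]
    rw [Fin.succAbove, if_pos h1]
    simp

/-! ### Derivatives of `detk` -/

lemma detk_eq_gg (k : ℕ) (f : ℂ → ℂ) :
    (fun w => detk k f w)
      = fun w => Matrix.det (Matrix.of fun p q : Fin k => gg f (p : ℕ) (q : ℕ) w) := rfl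

lemma wdzbar_detk (hΩ : IsOpen Ω) (hf : ContDiffOn ℝ (⊤ : ℕ∞) f Ω) (n : ℕ) (hz : z ∈ Ω) :
    wdzbar (fun w => detk (n + 1) f w) z
      = Matrix.det (Matrix.of fun p q : Fin (n + 1) =>
          gg f (p : ℕ) (if (q : ℕ) = n then n + 1 else (q : ℕ)) z) := by
  have hbar : wdzbar (fun w => detk (n + 1) f w) = wd Complex.I (fun w => detk (n + 1) f w) :=
    wdzbar_eq _
  rw [hbar, detk_eq_gg,
    wd_det (fun p q : Fin (n + 1) => gg f (p : ℕ) (q : ℕ))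
      (fun p q => gg_diffAt hΩ hf _ _ hz)]
  have hentry : ∀ j : Fin (n + 1),
      (Matrix.of fun p q : Fin (n + 1) =>
          if q = j then wd Complex.I (gg f (p : ℕ) (q : ℕ)) z else gg f (p : ℕ) (q : ℕ) z)
        = (Matrix.of fun p q : Fin (n + 1) =>
          if q = j then gg f (p : ℕ) ((q : ℕ) + 1) z else gg f (p : ℕ) (q : ℕ) z) := by
    intro j
    ext p q
    simp only [Matrix.of_apply]
    split
    · exact gg_wdzbar hΩ hf _ _ hz
    · rfl
  simp only [hentry]
  rw [Finset.sum_eq_single_of_mem (Fin.last n) (Finset.mem_univ _)]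
  · congr 1
    ext p q
    simp only [Matrix.of_apply]
    by_cases hq : (q : ℕ) = n
    · have hqlast : q = Fin.last n := Fin.ext (by simpa using hq)
      rw [if_pos hqlast, if_pos hq, hq]
    · have hqlast : q ≠ Fin.last n := fun hh => hq (by rw [hh]; simp)
      rw [if_neg hqlast, if_neg hq]
  · intro j _ hj
    have hjn : (j : ℕ) < n := by
      rcases Nat.lt_succ_iff_lt_or_eq.mp j.isLt with h | h
      · exact h
      · exact absurd (Fin.ext (by simpa using h)) hj
    refine Matrix.det_zero_of_column_eq (i := j) (j := ⟨(j : ℕ) + 1, by omega⟩)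
      (fun hh => ?_) (fun p => ?_)
    · have := congrArg Fin.val hh
      simp at this
    · simp only [Matrix.of_apply, if_pos rfl]
      have h2 : (⟨(j : ℕ) + 1, by omega⟩ : Fin (n + 1)) ≠ j := by
        intro hh
        have := congrArg Fin.val hh
        simp at this
      rw [if_neg h2]
      simp

lemma wdz_detk (hΩ : IsOpen Ω) (hf : ContDiffOn ℝ (⊤ : ℕ∞) f Ω) (n : ℕ) (hz : z ∈ Ω) :
    wdz (fun w => detk (n + 1) f w) z
      = Matrix.det (Matrix.of fun p q : Fin (n + 1) =>
          gg f (if (p : ℕ) = n then n + 1 else (p : ℕ)) (q : ℕ) z) := by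
  have hzz : wdz (fun w => detk (n + 1) f w) = wd (-Complex.I) (fun w => detk (n + 1) f w) :=
    wdz_eq _
  rw [hzz, detk_eq_gg,
    wd_det_row (fun p q : Fin (n + 1) => gg f (p : ℕ) (q : ℕ))
      (fun p q => gg_diffAt hΩ hf _ _ hz)]
  have hentry : ∀ i : Fin (n + 1),
      (Matrix.of fun p q : Fin (n + 1) =>
          if p = i then wd (-Complex.I) (gg f (p : ℕ) (q : ℕ)) z else gg f (p : ℕ) (q : ℕ) z)
        = (Matrix.of fun p q : Fin (n + 1) =>
          if p = i then gg f ((p : ℕ) + 1) (q : ℕ) z else gg f (p : ℕ) (q : ℕ) z) := by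
    intro i
    ext p q
    simp only [Matrix.of_apply]
    split
    · exact gg_wdz f _ _ z
    · rfl
  simp only [hentry]
  rw [Finset.sum_eq_single_of_mem (Fin.last n) (Finset.mem_univ _)]
  · congr 1
    ext p q
    simp only [Matrix.of_apply]
    by_cases hp : (p : ℕ) = n
    · have hplast : p = Fin.last n := Fin.ext (by simpa using hp)
      rw [if_pos hplast, if_pos hp, hp]
    · have hplast : p ≠ Fin.last n := fun hh => hp (by rw [hh]; simp)
      rw [if_neg hplast, if_neg hp]
  · intro i _ hi
    have hin : (i : ℕ) < n := by
      rcases Nat.lt_succ_iff_lt_or_eq.mp i.isLt with h | h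
      · exact h
      · exact absurd (Fin.ext (by simpa using h)) hi
    refine Matrix.det_zero_of_row_eq (i := i) (j := ⟨(i : ℕ) + 1, by omega⟩)
      (fun hh => ?_) (funext fun q => ?_)
    · have := congrArg Fin.val hh
      simp at this
    · simp only [Matrix.of_apply, if_pos rfl]
      have h2 : (⟨(i : ℕ) + 1, by omega⟩ : Fin (n + 1)) ≠ i := by
        intro hh
        have := congrArg Fin.val hh
        simp at this
      rw [if_neg h2]
      simp

lemma wdz_wdzbar_detk (hΩ : IsOpen Ω) (hf : ContDiffOn ℝ (⊤ : ℕ∞) f Ω) (n : ℕ) (hz : z ∈ Ω) :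
    wdz (fun w => wdzbar (fun w' => detk (n + 1) f w') w) z
      = Matrix.det (Matrix.of fun p q : Fin (n + 1) =>
          gg f (if (p : ℕ) = n then n + 1 else (p : ℕ))
            (if (q : ℕ) = n then n + 1 else (q : ℕ)) z) := by
  have hzz : wdz (fun w => wdzbar (fun w' => detk (n + 1) f w') w)
      = wd (-Complex.I) (fun w => wdzbar (fun w' => detk (n + 1) f w') w) := wdz_eq _
  rw [hzz]
  have hev : (fun w => wdzbar (fun w' => detk (n + 1) f w') w) =ᶠ[nhds z]
      (fun w => Matrix.det (Matrix.of fun p q : Fin (n + 1) =>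
          gg f (p : ℕ) (if (q : ℕ) = n then n + 1 else (q : ℕ)) w)) :=
    Filter.eventuallyEq_of_mem (hΩ.mem_nhds hz) (fun w hw => wdzbar_detk hΩ hf n hw)
  rw [wd_congr (-Complex.I) hev,
    wd_det_row (fun p q : Fin (n + 1) => gg f (p : ℕ) (if (q : ℕ) = n then n + 1 else (q : ℕ)))
      (fun p q => gg_diffAt hΩ hf _ _ hz)]
  have hentry : ∀ i : Fin (n + 1),
      (Matrix.of fun p q : Fin (n + 1) =>
          if p = i then wd (-Complex.I)
            (gg f (p : ℕ) (if (q : ℕ) = n then n + 1 else (q : ℕ))) z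
          else gg f (p : ℕ) (if (q : ℕ) = n then n + 1 else (q : ℕ)) z)
        = (Matrix.of fun p q : Fin (n + 1) =>
          if p = i then gg f ((p : ℕ) + 1) (if (q : ℕ) = n then n + 1 else (q : ℕ)) z
          else gg f (p : ℕ) (if (q : ℕ) = n then n + 1 else (q : ℕ)) z) := by
    intro i
    ext p q
    simp only [Matrix.of_apply]
    split
    · exact gg_wdz f _ _ z
    · rfl
  simp only [hentry]
  rw [Finset.sum_eq_single_of_mem (Fin.last n) (Finset.mem_univ _)]
  · congr 1
    ext p q
    simp only [Matrix.of_apply]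
    by_cases hp : (p : ℕ) = n
    · have hplast : p = Fin.last n := Fin.ext (by simpa using hp)
      rw [if_pos hplast, if_pos hp, hp]
    · have hplast : p ≠ Fin.last n := fun hh => hp (by rw [hh]; simp)
      rw [if_neg hplast, if_neg hp]
  · intro i _ hi
    have hin : (i : ℕ) < n := by
      rcases Nat.lt_succ_iff_lt_or_eq.mp i.isLt with h | h
      · exact h
      · exact absurd (Fin.ext (by simpa using h)) hi
    refine Matrix.det_zero_of_row_eq (i := i) (j := ⟨(i : ℕ) + 1, by omega⟩)
      (fun hh => ?_) (funext fun q => ?_)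
    · have := congrArg Fin.val hh
      simp at this
    · simp only [Matrix.of_apply, if_pos rfl]
      have h2 : (⟨(i : ℕ) + 1, by omega⟩ : Fin (n + 1)) ≠ i := by
        intro hh
        have := congrArg Fin.val hh
        simp at this
      rw [if_neg h2]
      simp


end DetkAux

/-- For a smooth complex-valued function `f` on an open subset of
`ℂ` and every `k ≥ 1`,
`det_{k+1}(f)·det_{k−1}(f) = det_k(f)·∂_z∂_z̄(det_k(f)) − ∂_z(det_k(f))·∂_z̄(det_k(f))`. -/


theorem detk_recursion (Ω : Set ℂ) (hΩ : IsOpen Ω)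
    (f : ℂ → ℂ) (hf : ContDiffOn ℝ (⊤ : ℕ∞) f Ω) (k : ℕ) (hk : 1 ≤ k) :
    ∀ z ∈ Ω,
      detk (k + 1) f z * detk (k - 1) f z =
        detk k f z * wdz (fun w => wdzbar (fun w' => detk k f w') w) z
          - wdz (fun w => detk k f w) z * wdzbar (fun w => detk k f w) z := by
  classical
  obtain ⟨n, rfl⟩ : ∃ n, k = n + 1 := ⟨k - 1, (Nat.succ_pred_eq_of_pos hk).symm⟩
  intro z hz
  set A : Matrix (Fin (n + 2)) (Fin (n + 2)) ℂ :=
    Matrix.of (fun p q : Fin (n + 2) => DetkAux.gg f (p : ℕ) (q : ℕ) z) with hA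
  have h0 : detk (n + 1 + 1) f z = A.det := rfl
  have h1 : detk (n + 1 - 1) f z
      = (A.submatrix (fun i : Fin n => i.castSucc.castSucc)
          (fun i : Fin n => i.castSucc.castSucc)).det := by
    show Matrix.det (Matrix.of fun p q : Fin n => DetkAux.gg f (p : ℕ) (q : ℕ) z) = _
    congr 1
  have h2 : detk (n + 1) f z = (A.submatrix Fin.castSucc Fin.castSucc).det := by
    show Matrix.det (Matrix.of fun p q : Fin (n + 1) => DetkAux.gg f (p : ℕ) (q : ℕ) z) = _
    congr 1
  have h3 : wdzbar (fun w => detk (n + 1) f w) z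
      = (A.submatrix Fin.castSucc ((Fin.last n).castSucc).succAbove).det := by
    rw [DetkAux.wdzbar_detk hΩ hf n hz]
    congr 1
    ext p q
    simp [hA, DetkAux.val_pSA]
  have h4 : wdz (fun w => detk (n + 1) f w) z
      = (A.submatrix ((Fin.last n).castSucc).succAbove Fin.castSucc).det := by
    rw [DetkAux.wdz_detk hΩ hf n hz]
    congr 1
    ext p q
    simp [hA, DetkAux.val_pSA]
  have h5 : wdz (fun w => wdzbar (fun w' => detk (n + 1) f w') w) z
      = (A.submatrix ((Fin.last n).castSucc).succAbove ((Fin.last n).castSucc).succAbove).det := by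
    rw [DetkAux.wdz_wdzbar_detk hΩ hf n hz]
    congr 1
    ext p q
    simp [hA, DetkAux.val_pSA]
  rw [h0, h1, h2, h3, h4, h5]
  exact DetkAux.dj_fin n A
end
end

section
/- (Desnanot–Jacobi type identity) Let R be a commutative ring, k ≥ 2, and let N be a (k+1)×(k+1) matrix over R. Let M₁ be the (k−1)×(k−1) submatrix of N obtained by deleting the last two rows and last two columns; let N₁ be obtained from N by deleting row k+1 and column k+1; N₂ by deleting row k and column k; N₁* by deleting row k and column k+1; and N₂* by deleting row k+1 and column k. Then det(N)·det(M₁) = det(N₁)·det(N₂) − det(N₁*)·det(N₂*). -/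
open Matrix

set_option maxHeartbeats 1000000 in
lemma dj_key (R : Type*) [CommRing R] (k : ℕ) (hk : 2 ≤ k)
    (N : Matrix (Fin (k + 1)) (Fin (k + 1)) R) :
    N.det *
      ((N.submatrix Fin.castSucc Fin.castSucc).det *
          (N.submatrix (Fin.succAbove ⟨k - 1, by clear hk; omega⟩)
            (Fin.succAbove ⟨k - 1, by clear hk; omega⟩)).det
        - (N.submatrix (Fin.succAbove ⟨k - 1, by clear hk; omega⟩) Fin.castSucc).det *
            (N.submatrix Fin.castSucc (Fin.succAbove ⟨k - 1, by clear hk; omega⟩)).det)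
      = N.det ^ 2 *
        (N.submatrix (fun i : Fin (k - 1) => Fin.castLE (by clear hk; omega) i)
          (fun j : Fin (k - 1) => Fin.castLE (by clear hk; omega) j)).det := by
  have hk1 : k - 1 + 2 = k + 1 := by omega
  set p : Fin (k + 1) := ⟨k - 1, by omega⟩ with hp
  set l : Fin (k + 1) := ⟨k, by omega⟩ with hl
  let e : Fin (k - 1) ⊕ Fin 2 ≃ Fin (k + 1) := finSumFinEquiv.trans (finCongr hk1)
  have heL : ∀ i : Fin (k - 1), ((e (Sum.inl i) : Fin (k+1)) : ℕ) = (i : ℕ) := by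
    intro i; simp [e]
  have heR : ∀ j : Fin 2, ((e (Sum.inr j) : Fin (k+1)) : ℕ) = k - 1 + (j : ℕ) := by
    intro j; simp [e]
  set C : Matrix (Fin (k + 1)) (Fin (k + 1)) R := Matrix.of fun i j =>
    if (j : ℕ) < k - 1 then (if i = j then 1 else 0) else N.adjugate i j with hC
  have hNC : ∀ i j, (N * C) i j =
      if (j : ℕ) < k - 1 then N i j else N.det * (if i = j then 1 else 0) := by
    intro i j
    by_cases h : (j : ℕ) < k - 1
    · simp only [mul_apply, hC, h, if_pos, mul_ite, mul_one, mul_zero]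
      simp [h]
    · have := congrFun (congrFun (Matrix.mul_adjugate N) i) j
      simp only [mul_apply, hC, of_apply, h, if_neg, if_false] at *
      simp only [this, Matrix.smul_apply, Matrix.one_apply, smul_ite, smul_eq_mul,
        mul_one, mul_zero]
  -- det(N*C)
  have h1 : (N * C).submatrix e e =
      fromBlocks
        (N.submatrix (fun i : Fin (k - 1) => Fin.castLE (by omega) i)
          (fun j : Fin (k - 1) => Fin.castLE (by omega) j))
        0
        (Matrix.of fun i j => N (e (Sum.inr i)) (Fin.castLE (by omega) j))
        (N.det • (1 : Matrix (Fin 2) (Fin 2) R)) := by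
    ext i j
    rcases i with i | i <;> rcases j with j | j
    · have hj : ((e (Sum.inl j)) : ℕ) < k - 1 := by rw [heL]; exact j.isLt
      have : e (Sum.inl j) = Fin.castLE (by omega) j := Fin.ext (heL j)
      have hi : e (Sum.inl i) = Fin.castLE (by omega) i := Fin.ext (heL i)
      simp [hNC, hj, this, hi]
    · have hj : ¬ ((e (Sum.inr j)) : ℕ) < k - 1 := by rw [heR]; omega
      simp only [submatrix_apply, hNC, hj, if_neg, if_false, fromBlocks_apply₁₂,
        Matrix.zero_apply]
      rw [if_neg]
      · ring
      · intro h
        have := e.injective h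
        simp at this
    · have hj : ((e (Sum.inl j)) : ℕ) < k - 1 := by rw [heL]; exact j.isLt
      have : e (Sum.inl j) = Fin.castLE (by omega) j := Fin.ext (heL j)
      simp [hNC, hj, this]
    · have hj : ¬ ((e (Sum.inr j)) : ℕ) < k - 1 := by rw [heR]; omega
      have : (e (Sum.inr i) = e (Sum.inr j)) ↔ i = j := by
        constructor
        · intro h; exact Sum.inr_injective (e.injective h)
        · rintro rfl; rfl
      simp [hNC, hj, this, Matrix.one_apply, mul_ite]
  -- det C
  have h2 : C.submatrix e e =
      fromBlocks 1 (Matrix.of fun i j => N.adjugate (e (Sum.inl i)) (e (Sum.inr j))) 0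
        !![N.adjugate p p, N.adjugate p l; N.adjugate l p, N.adjugate l l] := by
    ext i j
    rcases i with i | i <;> rcases j with j | j
    · have hj : ((e (Sum.inl j)) : ℕ) < k - 1 := by rw [heL]; exact j.isLt
      have : (e (Sum.inl i) = e (Sum.inl j)) ↔ i = j := by
        constructor
        · intro h; exact Sum.inl_injective (e.injective h)
        · rintro rfl; rfl
      simp [hC, hj, this, Matrix.one_apply]
    · have hj : ¬ ((e (Sum.inr j)) : ℕ) < k - 1 := by rw [heR]; omega
      simp [hC, hj]
    · have hj : ((e (Sum.inl j)) : ℕ) < k - 1 := by rw [heL]; exact j.isLt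
      have hne : e (Sum.inr i) ≠ e (Sum.inl j) := by
        intro h
        have h2 := e.injective h
        simp at h2
      simp [hC, hj, hne]
    · have hj : ¬ ((e (Sum.inr j)) : ℕ) < k - 1 := by rw [heR]; omega
      have hpi : ∀ i : Fin 2, e (Sum.inr i) = if i = 0 then p else l := by
        intro i
        fin_cases i
        · exact Fin.ext (by rw [heR]; show k - 1 + 0 = k - 1; omega)
        · exact Fin.ext (by rw [heR]; show k - 1 + 1 = k; omega)
      simp only [submatrix_apply, hC, of_apply, hj, if_neg, if_false, fromBlocks_apply₂₂]
      rw [hpi i, hpi j]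
      fin_cases i <;> fin_cases j <;> simp
  -- adjugate entries
  have hsl : l.succAbove = Fin.castSucc := by
    have : l = Fin.last k := rfl
    rw [this, Fin.succAbove_last]
  have app : N.adjugate p p =
      (N.submatrix (Fin.succAbove p) (Fin.succAbove p)).det := by
    rw [Matrix.adjugate_fin_succ_eq_det_submatrix]
    rw [Even.neg_one_pow ⟨(p : ℕ), rfl⟩, one_mul]
  have all : N.adjugate l l = (N.submatrix Fin.castSucc Fin.castSucc).det := by
    rw [Matrix.adjugate_fin_succ_eq_det_submatrix, hsl]
    rw [Even.neg_one_pow ⟨(l : ℕ), rfl⟩, one_mul]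
  have apl : N.adjugate p l =
      -(N.submatrix Fin.castSucc (Fin.succAbove p)).det := by
    rw [Matrix.adjugate_fin_succ_eq_det_submatrix, hsl]
    rw [Odd.neg_one_pow ⟨k - 1, show (l:ℕ) + (p:ℕ) = 2*(k-1)+1 by
      show k + (k - 1) = 2*(k-1)+1; omega⟩, neg_one_mul]
  have alp : N.adjugate l p =
      -(N.submatrix (Fin.succAbove p) Fin.castSucc).det := by
    rw [Matrix.adjugate_fin_succ_eq_det_submatrix, hsl]
    rw [Odd.neg_one_pow ⟨k - 1, show (p:ℕ) + (l:ℕ) = 2*(k-1)+1 by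
      show (k - 1) + k = 2*(k-1)+1; omega⟩, neg_one_mul]
  have hdetNC : (N * C).det = N.det ^ 2 *
      (N.submatrix (fun i : Fin (k - 1) => Fin.castLE (by omega) i)
        (fun j : Fin (k - 1) => Fin.castLE (by omega) j)).det := by
    rw [← Matrix.det_submatrix_equiv_self e, h1, Matrix.det_fromBlocks_zero₁₂,
      Matrix.det_smul, Matrix.det_one]
    simp [Fintype.card_fin]
    ring
  have hdetC : C.det =
      (N.submatrix Fin.castSucc Fin.castSucc).det *
          (N.submatrix (Fin.succAbove p) (Fin.succAbove p)).det
        - (N.submatrix (Fin.succAbove p) Fin.castSucc).det *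
            (N.submatrix Fin.castSucc (Fin.succAbove p)).det := by
    rw [← Matrix.det_submatrix_equiv_self e, h2, Matrix.det_fromBlocks_zero₂₁,
      Matrix.det_one, one_mul, Matrix.det_fin_two_of, app, all, apl, alp]
    ring
  calc N.det * _ = N.det * C.det := by rw [hdetC]
    _ = (N * C).det := (Matrix.det_mul N C).symm
    _ = _ := hdetNC




set_option maxHeartbeats 800000 in
/-- **Desnanot–Jacobi type identity.** Let `N` be a `(k+1)×(k+1)`
matrix over a commutative ring (rows/columns indexed `1, …, k+1`, i.e. `0, …, k`
zero-based). With `M₁` the submatrix deleting the last two rows and columns, `N₁`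
deleting row `k+1` and column `k+1`, `N₂` deleting row `k` and column `k`, `N₁*`
deleting row `k` and column `k+1`, and `N₂*` deleting row `k+1` and column `k`,
one has `det N · det M₁ = det N₁ · det N₂ − det N₁* · det N₂*`. -/
theorem desnanot_jacobi (R : Type*) [CommRing R] (k : ℕ) (hk : 2 ≤ k)
    (N : Matrix (Fin (k + 1)) (Fin (k + 1)) R) :
    N.det *
        (N.submatrix (fun i : Fin (k - 1) => Fin.castLE (by omega) i)
          (fun j : Fin (k - 1) => Fin.castLE (by omega) j)).det
      = (N.submatrix Fin.castSucc Fin.castSucc).det *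
          (N.submatrix (Fin.succAbove ⟨k - 1, by omega⟩)
            (Fin.succAbove ⟨k - 1, by omega⟩)).det
        - (N.submatrix (Fin.succAbove ⟨k - 1, by omega⟩) Fin.castSucc).det *
            (N.submatrix Fin.castSucc (Fin.succAbove ⟨k - 1, by omega⟩)).det := by
  classical
  set A : Matrix (Fin (k + 1)) (Fin (k + 1)) (MvPolynomial (Fin (k + 1) × Fin (k + 1)) ℤ) :=
    Matrix.mvPolynomialX (Fin (k + 1)) (Fin (k + 1)) ℤ with hAdef
  set φ : MvPolynomial (Fin (k + 1) × Fin (k + 1)) ℤ →+* R :=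
    (MvPolynomial.aeval fun q : Fin (k + 1) × Fin (k + 1) => N q.1 q.2).toRingHom with hφ
  have hN : A.map φ = N := by
    ext i j
    simp [hAdef, hφ, Matrix.mvPolynomialX_apply]
  have hA : A.det *
        (A.submatrix (fun i : Fin (k - 1) => Fin.castLE (by omega) i)
          (fun j : Fin (k - 1) => Fin.castLE (by omega) j)).det
      = (A.submatrix Fin.castSucc Fin.castSucc).det *
          (A.submatrix (Fin.succAbove ⟨k - 1, by omega⟩)
            (Fin.succAbove ⟨k - 1, by omega⟩)).det
        - (A.submatrix (Fin.succAbove ⟨k - 1, by omega⟩) Fin.castSucc).det *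
            (A.submatrix Fin.castSucc (Fin.succAbove ⟨k - 1, by omega⟩)).det := by
    apply mul_left_cancel₀ (Matrix.det_mvPolynomialX_ne_zero (Fin (k + 1)) ℤ)
    rw [show Matrix.mvPolynomialX (Fin (k + 1)) (Fin (k + 1)) ℤ = A from rfl]
    rw [dj_key _ k hk A]
    ring
  have h2 := congrArg φ hA
  simp only [_root_.map_mul, _root_.map_sub, RingHom.map_det, RingHom.mapMatrix_apply,
    ← Matrix.submatrix_map, hN] at h2
  exact h2
end

section
/- (Generalized Vandermonde determinant with derivatives) Let k ≥ 0, β_0, β_1, …, β_k ∈ ℝ, and for z in the slit plane ℂ∖(−∞,0] define z^β using the principal branch of the logarithm. Then the determinant of the (k+1)×(k+1) matrix whose (i,j) entry is the i-th complex derivative of z ↦ z^{β_j} (0 ≤ i, j ≤ k) equals ∏_{0 ≤ p < q ≤ k} (β_q − β_p) · z^{β_0 + β_1 + ⋯ + β_k − k(k+1)/2} for every z ∈ ℂ∖(−∞,0]. -/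
open Finset Polynomial

lemma iter_deriv_cpow (c : ℂ) (n : ℕ) :
    ∀ z ∈ Complex.slitPlane,
      deriv^[n] (fun w : ℂ => w ^ c) z
        = (∏ m ∈ Finset.range n, (c - m)) * z ^ (c - n) := by
  induction n with
  | zero => intro z hz; simp
  | succ n ih =>
    intro z hz
    rw [Function.iterate_succ_apply']
    have hev : deriv^[n] (fun w : ℂ => w ^ c) =ᶠ[nhds z]
        fun w => (∏ m ∈ Finset.range n, (c - m)) * w ^ (c - n) :=
      Filter.eventuallyEq_of_mem (Complex.isOpen_slitPlane.mem_nhds hz)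
        (fun w hw => ih w hw)
    rw [hev.deriv_eq]
    have hd : HasDerivAt (fun w : ℂ => w ^ (c - n)) ((c - n) * z ^ (c - n - 1)) z := by
      simpa using (hasDerivAt_id z).cpow_const hz
    rw [deriv_const_mul _ hd.differentiableAt, hd.deriv, Finset.prod_range_succ]
    have he : c - (n + 1 : ℕ) = c - n - 1 := by push_cast; ring
    rw [he]; ring

lemma cpow_sum' {ι : Type*} {z : ℂ} (hz : z ≠ 0) (s : Finset ι) (f : ι → ℂ) :
    z ^ (∑ i ∈ s, f i) = ∏ i ∈ s, z ^ f i := by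
  classical
  induction s using Finset.induction with
  | empty => simp
  | insert _ _ h ih => rw [Finset.sum_insert h, Finset.prod_insert h, Complex.cpow_add _ _ hz, ih]

lemma prod_Ioi_fin_eq {n : ℕ} (β : ℕ → ℝ) :
    (∏ i : Fin n, ∏ j ∈ Finset.Ioi i, (((β (j:ℕ) : ℝ):ℂ) - ((β (i:ℕ) : ℝ):ℂ)))
      = ∏ q ∈ Finset.range n, ∏ p ∈ Finset.range q, (((β q : ℝ):ℂ) - ((β p : ℝ):ℂ)) := by
  rw [Finset.prod_comm' (t' := Finset.univ) (s' := fun j => Finset.Iio j)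
    (by intro x y; simp)]
  rw [← Fin.prod_univ_eq_prod_range
    (fun q => ∏ p ∈ Finset.range q, (((β q : ℝ):ℂ) - ((β p : ℝ):ℂ))) n]
  refine Finset.prod_congr rfl fun j _ => ?_
  rw [← Nat.Iio_eq_range, ← Fin.map_valEmbedding_Iio, Finset.prod_map]
  rfl

/-- **Generalized Vandermonde determinant with derivatives.**
For `β_0, …, β_k ∈ ℝ` and `z` in the slit plane (principal branch powers), the
determinant of the `(k+1)×(k+1)` matrix whose `(i,j)` entry is the `i`-th complex
derivative of `z ↦ z^{β_j}` equals
`∏_{0≤p<q≤k} (β_q − β_p) · z^{β_0+⋯+β_k − k(k+1)/2}`. -/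
theorem vandermonde_derivatives (k : ℕ) (β : ℕ → ℝ) :
    ∀ z ∈ Complex.slitPlane,
      Matrix.det (Matrix.of fun i j : Fin (k + 1) =>
          deriv^[(i : ℕ)] (fun w : ℂ => w ^ ((β (j : ℕ) : ℝ) : ℂ)) z)
        = (((∏ q ∈ Finset.range (k + 1), ∏ p ∈ Finset.range q, (β q - β p)) : ℝ) : ℂ) *
            z ^ ((((∑ j ∈ Finset.range (k + 1), β j) - (k : ℝ) * ((k : ℝ) + 1) / 2) : ℝ) : ℂ) := by
  intro z hz
  have hz0 : z ≠ 0 := Complex.slitPlane_ne_zero hz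
  set v : Fin (k + 1) → ℂ := fun j => ((β (j : ℕ) : ℝ) : ℂ) with hv
  set P : Fin (k + 1) → ℂ[X] := fun i => ∏ m ∈ Finset.range i, (X - C (m : ℂ)) with hP
  have hPmonic : ∀ i, (P i).Monic := fun i =>
    monic_prod_of_monic _ _ fun m _ => monic_X_sub_C _
  have hPdeg : ∀ i : Fin (k + 1), (P i).natDegree = i := by
    intro i
    rw [hP, natDegree_prod _ _ fun m _ => X_sub_C_ne_zero _]
    simp only [natDegree_X_sub_C, Finset.sum_const, smul_eq_mul, mul_one, Finset.card_range]
  have hPeval : ∀ (i : Fin (k + 1)) (x : ℂ),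
      (P i).eval x = ∏ m ∈ Finset.range i, (x - m) := by
    intro i x; rw [hP]; simp [eval_prod]
  -- rewrite the matrix
  have hM : (Matrix.of fun i j : Fin (k + 1) =>
        deriv^[(i : ℕ)] (fun w : ℂ => w ^ ((β (j : ℕ) : ℝ) : ℂ)) z)
      = Matrix.of fun i j : Fin (k + 1) =>
          (z ^ ((i : ℕ) : ℂ))⁻¹ * (z ^ v j * (P i).eval (v j)) := by
    ext i j
    rw [Matrix.of_apply, Matrix.of_apply, iter_deriv_cpow _ _ z hz, hPeval,
      Complex.cpow_sub _ _ hz0]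
    field_simp
    ring
  have hdet : Matrix.det (Matrix.of fun i j : Fin (k + 1) =>
        (z ^ ((i : ℕ) : ℂ))⁻¹ * (z ^ v j * (P i).eval (v j)))
      = (∏ i : Fin (k + 1), (z ^ ((i : ℕ) : ℂ))⁻¹) *
          ((∏ j : Fin (k + 1), z ^ v j) *
            Matrix.det (Matrix.of fun i j : Fin (k + 1) => (P i).eval (v j))) := by
    refine (Matrix.det_mul_column (fun i : Fin (k + 1) => (z ^ ((i : ℕ) : ℂ))⁻¹)
      (Matrix.of fun i j : Fin (k + 1) => z ^ v j * (P i).eval (v j))).trans ?_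
    congr 1
    exact Matrix.det_mul_row (fun j => z ^ v j)
      (Matrix.of fun i j : Fin (k + 1) => (P i).eval (v j))
  have hN : (Matrix.of fun i j : Fin (k + 1) => (P i).eval (v j))
      = Matrix.transpose (Matrix.of fun i j : Fin (k + 1) => (P j).eval (v i)) := by
    ext i j; rfl
  rw [hM, hdet, hN, Matrix.det_transpose,
    ← Matrix.det_eval_matrixOfPolynomials_eq_det_vandermonde v P (fun i => hPdeg i)
      (fun i => hPmonic i),
    Matrix.det_vandermonde]
  have hprod : (∏ i : Fin (k + 1), ∏ j ∈ Finset.Ioi i, (v j - v i))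
      = (((∏ q ∈ Finset.range (k + 1), ∏ p ∈ Finset.range q, (β q - β p)) : ℝ) : ℂ) := by
    rw [hv]
    push_cast
    exact prod_Ioi_fin_eq β
  rw [hprod]
  -- the power bookkeeping
  have hT : (∑ i : Fin (k + 1), ((i : ℕ) : ℂ)) = (k : ℂ) * ((k : ℂ) + 1) / 2 := by
    rw [Fin.sum_univ_eq_sum_range (fun i => (i : ℂ)) (k + 1)]
    have h2 : ((∑ i ∈ Finset.range (k + 1), (i : ℂ))) * 2 = (k + 1) * k := by
      have := Finset.sum_range_id_mul_two (k + 1)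
      rw [Nat.add_sub_cancel] at this
      have h3 := congrArg (fun n : ℕ => (n : ℂ)) this
      push_cast at h3
      linear_combination h3
    field_simp
    linear_combination h2
  have hS : ((((∑ j ∈ Finset.range (k + 1), β j) : ℝ) : ℂ))
      = ∑ j : Fin (k + 1), v j := by
    rw [hv, Fin.sum_univ_eq_sum_range (fun j => ((β j : ℝ) : ℂ)) (k + 1)]
    push_cast
    rfl
  have hpow : z ^ ((((∑ j ∈ Finset.range (k + 1), β j) - (k : ℝ) * ((k : ℝ) + 1) / 2) : ℝ) : ℂ)
      = (∏ i : Fin (k + 1), (z ^ ((i : ℕ) : ℂ))⁻¹) * ∏ j : Fin (k + 1), z ^ v j := by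
    have : ((((∑ j ∈ Finset.range (k + 1), β j) - (k : ℝ) * ((k : ℝ) + 1) / 2) : ℝ) : ℂ)
        = (∑ j : Fin (k + 1), v j) - (∑ i : Fin (k + 1), ((i : ℕ) : ℂ)) := by
      rw [hT, ← hS]; push_cast; ring
    rw [this, Complex.cpow_sub _ _ hz0, cpow_sum' hz0, cpow_sum' hz0,
      div_eq_mul_inv, ← Finset.prod_inv_distrib]
    ring
  rw [hpow]
  ring
end
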